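/- arXiv:1004.2126 — 9 statements merged into one kernel-verified Lean document; each statement's English description precedes it below -/
import Mathlib

section
/- Let X be a compact metric space, n ≥ 2 an integer, and f, h : X → X homeomorphisms satisfying h ∘ f ∘ h⁻¹ = fⁿ. If the fixed-point set fix(f) is nonempty, then there exists a BS-minimal set M contained in fix(f); moreover this set M is also an h-minimal set. -/
open Set

/-- A `BS`-minimal set for the action generated by `f` and `h`: a nonempty closed set,
invariant under both `f` and `h`, containing no proper nonempty closed subset invariant
under both `f` and `h`. -/
def IsBSMinimal {X : Type*} [TopologicalSpace X] (f h : X → X) (M : Set X) : Prop :=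
  M.Nonempty ∧ IsClosed M ∧ f '' M = M ∧ h '' M = M ∧
    ∀ K ⊆ M, K.Nonempty → IsClosed K → f '' K = K → h '' K = K → K = M

/-- A minimal set for a single map `g`: a nonempty closed `g`-invariant set containing
no proper nonempty closed `g`-invariant subset. -/
def IsMinimalFor {X : Type*} [TopologicalSpace X] (g : X → X) (M : Set X) : Prop :=
  M.Nonempty ∧ IsClosed M ∧ g '' M = M ∧
    ∀ K ⊆ M, K.Nonempty → IsClosed K → g '' K = K → K = M

/-- if `fix(f)` is nonempty, there is a BS-minimal set contained in `fix(f)`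
which moreover is an `h`-minimal set. -/
theorem bs_minimal_set_in_fixed_points
    {X : Type*} [MetricSpace X] [CompactSpace X]
    (n : ℕ) (hn : 2 ≤ n) (f h : X ≃ₜ X)
    (hrel : ∀ x : X, h (f (h.symm x)) = (⇑f)^[n] x)
    (hfix : {x : X | f x = x}.Nonempty) :
    ∃ M : Set X, IsBSMinimal (⇑f) (⇑h) M ∧ M ⊆ {x : X | f x = x} ∧
      IsMinimalFor (⇑h) M := by
  classical
  set F : Set X := {x : X | f x = x} with hF
  have hFclosed : IsClosed F := isClosed_eq f.continuous continuous_id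
  have hFcompact : IsCompact F := hFclosed.isCompact
  -- h⁻¹ maps fix(f) into itself
  have hinv : ∀ x ∈ F, h.symm x ∈ F := by
    intro x hx
    have h1 : (⇑f)^[n] x = x := Function.iterate_fixed hx n
    have h2 : h (f (h.symm x)) = h (h.symm x) := by
      rw [hrel x, h1, h.apply_symm_apply]
    exact h.injective h2
  set A : ℕ → Set X := fun k => (⇑h.symm)^[k] '' F with hA
  have hA0 : A 0 = F := by simp [hA]
  have hAsucc : ∀ k, A (k + 1) = (⇑h.symm)^[k] '' (⇑h.symm '' F) := by
    intro k
    simp only [hA, Function.iterate_succ, Set.image_comp]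
  have hAsucc' : ∀ k, A (k + 1) = ⇑h.symm '' A k := by
    intro k
    simp only [hA, Function.iterate_succ', Set.image_comp]
  have hsymmF : ⇑h.symm '' F ⊆ F := by
    rintro _ ⟨x, hx, rfl⟩; exact hinv x hx
  have hstep : ∀ k, A (k + 1) ⊆ A k := by
    intro k
    rw [hAsucc k]
    exact Set.image_mono hsymmF
  have hAanti : Antitone A := antitone_nat_of_succ_le hstep
  have hAcompact : ∀ k, IsCompact (A k) :=
    fun k => hFcompact.image ((h.symm.continuous).iterate k)
  have hAclosed : ∀ k, IsClosed (A k) := fun k => (hAcompact k).isClosed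
  have hAne : ∀ k, (A k).Nonempty := fun k => hfix.image _
  set K : Set X := ⋂ k, A k with hK
  have hKne : K.Nonempty :=
    IsCompact.nonempty_iInter_of_directed_nonempty_isCompact_isClosed A
      hAanti.directed_ge hAne hAcompact hAclosed
  have hKsubF : K ⊆ F := by
    rw [← hA0]; exact Set.iInter_subset A 0
  have hKclosed : IsClosed K := isClosed_iInter hAclosed
  have hsymmA : ∀ k, ⇑h.symm '' A k ⊆ A k := by
    intro k; rw [← hAsucc' k]; exact hstep k
  have hKinv : ⇑h '' K = K := by
    apply subset_antisymm
    · intro x hx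
      have hx' : x ∈ ⋂ k, ⇑h '' A k := Set.image_iInter_subset A (⇑h) hx
      rw [Set.mem_iInter]
      intro k
      have := Set.mem_iInter.mp hx' (k + 1)
      rw [hAsucc' k] at this
      obtain ⟨y, hy, hxy⟩ := this
      obtain ⟨z, hz, rfl⟩ := hy
      rw [h.apply_symm_apply] at hxy
      rwa [← hxy]
    · intro x hx
      refine ⟨h.symm x, ?_, h.apply_symm_apply x⟩
      rw [Set.mem_iInter]
      intro k
      exact hsymmA k ⟨x, Set.mem_iInter.mp hx k, rfl⟩
  -- Zorn's lemma for h-minimal subsets of K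
  set S : Set (Set X) := {C | C ⊆ K ∧ C.Nonempty ∧ IsClosed C ∧ ⇑h '' C = C} with hS
  have hchain : ∀ c ⊆ S, IsChain (· ⊆ ·) c → c.Nonempty →
      ∃ lb ∈ S, ∀ s ∈ c, lb ⊆ s := by
    intro c hcS hchain hcne
    obtain ⟨s₀, hs₀⟩ := hcne
    haveI : Nonempty c := ⟨⟨s₀, hs₀⟩⟩
    have hdir : DirectedOn (· ⊇ ·) c := IsChain.directedOn hchain.symm
    have hne : (⋂₀ c).Nonempty :=
      IsCompact.nonempty_sInter_of_directed_nonempty_isCompact_isClosed hdir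
        (fun U hU => (hcS hU).2.1)
        (fun U hU => (hcS hU).2.2.1.isCompact)
        (fun U hU => (hcS hU).2.2.1)
    refine ⟨⋂₀ c, ⟨?_, hne, ?_, ?_⟩, fun s hs => Set.sInter_subset_of_mem hs⟩
    · exact (Set.sInter_subset_of_mem hs₀).trans (hcS hs₀).1
    · exact isClosed_sInter fun U hU => (hcS hU).2.2.1
    · rw [Set.sInter_eq_iInter, Set.image_iInter h.bijective]
      exact Set.iInter_congr fun s => (hcS s.2).2.2.2
  obtain ⟨M, hMK, hMmin⟩ :=
    zorn_superset_nonempty S hchain K ⟨subset_rfl, hKne, hKclosed, hKinv⟩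
  obtain ⟨⟨hMK', hMne, hMclosed, hMhinv⟩, hMmin'⟩ := hMmin
  have hmin : ∀ C ⊆ M, C.Nonempty → IsClosed C → ⇑h '' C = C → C = M := by
    intro C hCM hCne hCcl hCinv
    exact subset_antisymm hCM (hMmin' ⟨hCM.trans hMK', hCne, hCcl, hCinv⟩ hCM)
  have hMF : M ⊆ F := hMK'.trans hKsubF
  have hMfinv : ⇑f '' M = M := by
    apply subset_antisymm
    · rintro _ ⟨x, hx, rfl⟩
      rwa [hMF hx]
    · intro x hx
      exact ⟨x, hx, hMF hx⟩
  refine ⟨M, ⟨hMne, hMclosed, hMfinv, hMhinv, ?_⟩, hMF, hMne, hMclosed, hMhinv, ?_⟩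
  · intro C hCM hCne hCcl _ hChinv
    exact hmin C hCM hCne hCcl hChinv
  · exact hmin
end

section
/- Let X be a compact metric space, n ≥ 2 an integer, and f, h : X → X homeomorphisms satisfying h ∘ f ∘ h⁻¹ = fⁿ. If M is a BS-minimal set with M ∩ fix(f) ≠ ∅, then M ⊆ fix(f). -/
/-- a BS-minimal set meeting `fix(f)` is contained in `fix(f)`. -/
theorem bs_minimal_meeting_fix_subset_fix
    {X : Type*} [MetricSpace X] [CompactSpace X]
    (n : ℕ) (hn : 2 ≤ n) (f h : X ≃ₜ X)
    (hrel : ∀ x : X, h (f (h.symm x)) = (⇑f)^[n] x)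
    (M : Set X) (hM : IsBSMinimal (⇑f) (⇑h) M)
    (hmeet : (M ∩ {x : X | f x = x}).Nonempty) :
    M ⊆ {x : X | f x = x} := by
  obtain ⟨hMne, hMcl, hMf, hMh, hmin⟩ := hM
  set Fix : Set X := {x : X | f x = x} with hFixdef
  have hFixcl : IsClosed Fix := isClosed_eq f.continuous continuous_id
  have hsymmM : ⇑h.symm '' M = M := by
    conv_lhs => rw [← hMh]
    exact h.toEquiv.symm_image_image M
  have hfixsymm : ∀ x : X, f x = x → f (h.symm x) = h.symm x := by
    intro x hx
    have h1 := hrel x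
    rw [Function.iterate_fixed hx n] at h1
    have h2 : h (f (h.symm x)) = h (h.symm x) := by rw [h1, h.apply_symm_apply]
    exact h.injective h2
  set K : Set X := M ∩ Fix with hKdef
  have hKsub : ⇑h.symm '' K ⊆ K := by
    rintro _ ⟨y, ⟨hyM, hyF⟩, rfl⟩
    exact ⟨hsymmM ▸ Set.mem_image_of_mem _ hyM, hfixsymm y hyF⟩
  set S : ℕ → Set X := fun m => (⇑h.symm)^[m] '' K with hSdef
  have hS0 : S 0 = K := by simp [hSdef]
  have hSsucc : ∀ m, S (m + 1) = ⇑h.symm '' S m := by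
    intro m
    show (⇑h.symm)^[m + 1] '' K = _
    rw [Function.iterate_succ', Set.image_comp]
  have hSsub : ∀ m, S (m + 1) ⊆ S m := by
    intro m
    induction m with
    | zero => rw [hSsucc, hS0]; exact hKsub
    | succ k ih =>
      rw [hSsucc (k + 1)]
      calc ⇑h.symm '' S (k + 1) ⊆ ⇑h.symm '' S k := Set.image_mono ih
        _ = S (k + 1) := (hSsucc k).symm
  have hSanti : Antitone S := antitone_nat_of_succ_le hSsub
  have hSK : ∀ m, S m ⊆ K := fun m => hS0 ▸ hSanti (Nat.zero_le m)
  have hScl : ∀ m, IsClosed (S m) := by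
    intro m
    induction m with
    | zero => rw [hS0]; exact hMcl.inter hFixcl
    | succ k ih => rw [hSsucc]; exact h.symm.isClosedMap _ ih
  have hSne : ∀ m, (S m).Nonempty := by
    intro m
    induction m with
    | zero => rw [hS0]; exact hmeet
    | succ k ih => rw [hSsucc]; exact ih.image _
  set L : Set X := ⋂ m, S m with hLdef
  have hLne : L.Nonempty :=
    IsCompact.nonempty_iInter_of_directed_nonempty_isCompact_isClosed S
      hSanti.directed_ge hSne (fun m => (hScl m).isCompact) hScl
  have hLK : L ⊆ K := (Set.iInter_subset S 0).trans (le_of_eq hS0)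
  have hLM : L ⊆ M := hLK.trans Set.inter_subset_left
  have hLFix : L ⊆ Fix := hLK.trans Set.inter_subset_right
  have hLcl : IsClosed L := isClosed_iInter hScl
  have hfL : ⇑f '' L = L := by
    apply Set.Subset.antisymm
    · rintro _ ⟨x, hx, rfl⟩
      have : f x = x := hLFix hx
      rwa [this]
    · intro x hx
      exact ⟨x, hx, hLFix hx⟩
  have hhL : ⇑h '' L = L := by
    apply Set.Subset.antisymm
    · rintro _ ⟨x, hx, rfl⟩
      refine Set.mem_iInter.2 fun m => ?_
      have hx1 := Set.mem_iInter.1 hx (m + 1)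
      rw [hSsucc m] at hx1
      obtain ⟨y, hy, hxy⟩ := hx1
      rw [← hxy, h.apply_symm_apply]
      exact hy
    · intro x hx
      refine ⟨h.symm x, Set.mem_iInter.2 fun m => ?_, h.apply_symm_apply x⟩
      have : h.symm x ∈ S (m + 1) := by
        rw [hSsucc m]
        exact Set.mem_image_of_mem _ (Set.mem_iInter.1 hx m)
      exact hSsub m this
  intro x hx
  have hLM' := hmin L hLM hLne hLcl hfL hhL
  rw [← hLM'] at hx
  exact hLFix hx
end

section
/- Let X be a compact metric space, n ≥ 2 an integer, and f, h : X → X homeomorphisms satisfying h ∘ f ∘ h⁻¹ = fⁿ. If the set per(f) of periodic points of f is nonempty, then there exist a positive integer N and a BS-minimal set M such that M ⊆ fix(f^N). -/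
/-- If a set is pointwise invariant under a homeomorphism (in the iff sense), its image
under the homeomorphism equals itself. -/
lemma image_eq_of_mem_iff {X : Type*} [TopologicalSpace X] (e : X ≃ₜ X) (S : Set X)
    (H : ∀ y, y ∈ S ↔ e y ∈ S) : e '' S = S := by
  ext z
  constructor
  · rintro ⟨y, hy, rfl⟩
    exact (H y).1 hy
  · intro hz
    refine ⟨e.symm z, (H (e.symm z)).2 ?_, e.apply_symm_apply z⟩
    rw [e.apply_symm_apply]
    exact hz

/-- if `per(f)` is nonempty, there exist `N ≥ 1` and a BS-minimal set `M`
with `M ⊆ fix(f^N)`. -/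
theorem bs_minimal_set_in_periodic_points
    {X : Type*} [MetricSpace X] [CompactSpace X]
    (n : ℕ) (hn : 2 ≤ n) (f h : X ≃ₜ X)
    (hrel : ∀ x : X, h (f (h.symm x)) = (⇑f)^[n] x)
    (hper : ∃ x : X, ∃ p : ℕ, 1 ≤ p ∧ (⇑f)^[p] x = x) :
    ∃ N : ℕ, 1 ≤ N ∧ ∃ M : Set X, IsBSMinimal (⇑f) (⇑h) M ∧
      M ⊆ {x : X | (⇑f)^[N] x = x} := by
  obtain ⟨x, p, hp1, hxp⟩ := hper
  -- basic commutation: h (f y) = f^[n] (h y)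
  have hconj : ∀ y : X, h (f y) = (⇑f)^[n] (h y) := by
    intro y
    have := hrel (h y)
    rwa [h.symm_apply_apply] at this
  -- h (f^[m] y) = f^[n*m] (h y)
  have hconj_iter : ∀ (m : ℕ) (y : X), h ((⇑f)^[m] y) = (⇑f)^[n * m] (h y) := by
    intro m
    induction m with
    | zero => intro y; simp
    | succ m ih =>
      intro y
      rw [Function.iterate_succ_apply', hconj, ih, ← Function.iterate_add_apply]
      congr 1
      ring
  -- key claim: if f^[p] (h y) = h y then f^[p] y = y
  have claimA : ∀ y : X, (⇑f)^[p] (h y) = h y → (⇑f)^[p] y = y := by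
    intro y hy
    have hfix : (⇑f)^[n * p] (h y) = h y := by
      have : ((⇑f)^[p])^[n] (h y) = h y := Function.IsFixedPt.iterate hy n
      rwa [← Function.iterate_mul, mul_comm p n] at this
    have : h ((⇑f)^[p] y) = h y := by rw [hconj_iter p y, hfix]
    exact h.injective this
  -- the decreasing family G k = h^{-k}(fix f^p)
  set G : ℕ → Set X := fun k => {y : X | (⇑f)^[p] ((⇑h)^[k] y) = (⇑h)^[k] y} with hG
  have hGanti : ∀ k, G (k + 1) ⊆ G k := by
    intro k y hy
    have hy' : (⇑f)^[p] ((⇑h)^[k + 1] y) = (⇑h)^[k + 1] y := hy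
    rw [Function.iterate_succ_apply'] at hy'
    have : (⇑f)^[p] (h ((⇑h)^[k] y)) = h ((⇑h)^[k] y) := hy'
    exact claimA _ this
  have hGclosed : ∀ k, IsClosed (G k) := by
    intro k
    exact isClosed_eq ((f.continuous.iterate p).comp (h.continuous.iterate k))
      (h.continuous.iterate k)
  have hGne : ∀ k, (G k).Nonempty := by
    intro k
    refine ⟨(⇑h.symm)^[k] x, ?_⟩
    have hli : Function.LeftInverse (⇑h)^[k] (⇑h.symm)^[k] :=
      Function.LeftInverse.iterate h.right_inv k
    show (⇑f)^[p] ((⇑h)^[k] ((⇑h.symm)^[k] x)) = (⇑h)^[k] ((⇑h.symm)^[k] x)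
    rw [hli x, hxp]
  -- h^[k] ∘ f = f^[n^k] ∘ h^[k]
  have hk_f : ∀ (k : ℕ) (y : X), (⇑h)^[k] (f y) = (⇑f)^[n ^ k] ((⇑h)^[k] y) := by
    intro k
    induction k with
    | zero => intro y; simp
    | succ k ih =>
      intro y
      rw [Function.iterate_succ_apply', ih, hconj_iter,
        Function.iterate_succ_apply' (⇑h) k y]
      congr 1
      rw [pow_succ, mul_comm]
  -- f-invariance of each G k, pointwise
  have hGf : ∀ (k : ℕ) (y : X), y ∈ G k ↔ f y ∈ G k := by
    intro k y
    constructor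
    · intro hy
      show (⇑f)^[p] ((⇑h)^[k] (f y)) = (⇑h)^[k] (f y)
      rw [hk_f, ← Function.iterate_add_apply, add_comm, Function.iterate_add_apply, hy]
    · intro hy
      have hy' : (⇑f)^[p] ((⇑f)^[n ^ k] ((⇑h)^[k] y)) = (⇑f)^[n ^ k] ((⇑h)^[k] y) := by
        have := hy
        rwa [Set.mem_setOf_eq, hk_f] at this
      have : (⇑f)^[n ^ k] ((⇑f)^[p] ((⇑h)^[k] y)) = (⇑f)^[n ^ k] ((⇑h)^[k] y) := by
        rw [← Function.iterate_add_apply, add_comm, Function.iterate_add_apply, hy']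
      exact (f.injective.iterate (n ^ k)) this
  -- the set Λ
  set L : Set X := ⋂ k, G k with hL
  have hLsub : L ⊆ G 0 := Set.iInter_subset G 0
  have hLclosed : IsClosed L := isClosed_iInter hGclosed
  have hLne : L.Nonempty := by
    refine IsCompact.nonempty_iInter_of_sequence_nonempty_isCompact_isClosed G hGanti hGne
      ?_ hGclosed
    exact (hGclosed 0).isCompact
  have hLf : ∀ y, y ∈ L ↔ f y ∈ L := by
    intro y
    simp only [hL, Set.mem_iInter]
    exact forall_congr' fun k => hGf k y
  have hLh : ∀ y, y ∈ L ↔ h y ∈ L := by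
    intro y
    simp only [hL, Set.mem_iInter]
    constructor
    · intro hy k
      show (⇑f)^[p] ((⇑h)^[k] (h y)) = (⇑h)^[k] (h y)
      have := hy (k + 1)
      simpa [hG, Function.iterate_succ_apply] using this
    · intro hy k
      have hk1 : y ∈ G (k + 1) := by
        have := hy k
        simpa [hG, Function.iterate_succ_apply] using this
      exact hGanti k hk1
  -- Zorn's lemma for minimal sets inside L
  set S : Set (Set X) :=
    {K | K ⊆ L ∧ K.Nonempty ∧ IsClosed K ∧ ⇑f '' K = K ∧ ⇑h '' K = K} with hS
  have hLS : L ∈ S := by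
    refine ⟨le_refl L, hLne, hLclosed, ?_, ?_⟩
    · exact image_eq_of_mem_iff f L hLf
    · exact image_eq_of_mem_iff h L hLh
  have key : ∀ c ⊆ S, IsChain (· ⊆ ·) c → c.Nonempty → ∃ lb ∈ S, ∀ s ∈ c, lb ⊆ s := by
    intro c hcS hchain hcne
    refine ⟨⋂₀ c, ?_, fun s hs => Set.sInter_subset_of_mem hs⟩
    have hne : (⋂₀ c).Nonempty := by
      have : Nonempty c := hcne.to_subtype
      refine IsCompact.nonempty_sInter_of_directed_nonempty_isCompact_isClosed ?_ ?_ ?_ ?_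
      · intro a ha b hb
        rcases hchain.total ha hb with hab | hba
        · exact ⟨a, ha, le_refl a, hab⟩
        · exact ⟨b, hb, hba, le_refl b⟩
      · exact fun U hU => (hcS hU).2.1
      · exact fun U hU => (hcS hU).2.2.1.isCompact
      · exact fun U hU => (hcS hU).2.2.1
    obtain ⟨K₀, hK₀⟩ := hcne
    have hmemiff : ∀ (e : X ≃ₜ X), (∀ K ∈ c, ⇑e '' K = K) →
        ∀ y, y ∈ ⋂₀ c ↔ e y ∈ ⋂₀ c := by
      intro e he y
      constructor
      · intro hy K hK
        rw [← he K hK]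
        exact ⟨y, hy K hK, rfl⟩
      · intro hy K hK
        have := hy K hK
        rw [← he K hK] at this
        obtain ⟨z, hz, hze⟩ := this
        rwa [e.injective hze] at hz
    refine ⟨?_, hne, isClosed_sInter fun U hU => (hcS hU).2.2.1, ?_, ?_⟩
    · exact (Set.sInter_subset_of_mem hK₀).trans (hcS hK₀).1
    · exact image_eq_of_mem_iff f _ (hmemiff f fun K hK => (hcS hK).2.2.2.1)
    · exact image_eq_of_mem_iff h _ (hmemiff h fun K hK => (hcS hK).2.2.2.2)
  obtain ⟨m, hmL, hmin⟩ := zorn_superset_nonempty S key L hLS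
  obtain ⟨hmsub, hmne, hmcl, hmf, hmh⟩ := hmin.prop
  refine ⟨p, hp1, m, ⟨hmne, hmcl, hmf, hmh, ?_⟩, ?_⟩
  · intro K hKm hKne hKcl hKf hKh
    have hKS : K ∈ S := ⟨hKm.trans hmsub, hKne, hKcl, hKf, hKh⟩
    exact hmin.eq_of_le hKS hKm
  · intro y hy
    have := hmsub.trans hLsub hy
    simpa [hG] using this
end

section
/- Let X be a compact metric space, n ≥ 2 an integer, and f, h : X → X homeomorphisms satisfying h ∘ f ∘ h⁻¹ = fⁿ. Assume that per(f) is nonempty and that no positive power of f is the identity (as holds for any faithful action of BS(1,n)). Then the action of the group generated by f and h is not minimal: there exists a nonempty closed proper subset K ⊊ X with f(K) = K and h(K) = K; equivalently, some point of X has non-dense orbit under the group generated by f and h. -/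
/-- if `per(f) ≠ ∅` and no positive power of `f` is the identity, then the
action generated by `f` and `h` is not minimal: there is a nonempty closed proper subset
invariant under both `f` and `h`. -/
theorem bs_action_not_minimal
    {X : Type*} [MetricSpace X] [CompactSpace X]
    (n : ℕ) (hn : 2 ≤ n) (f h : X ≃ₜ X)
    (hrel : ∀ x : X, h (f (h.symm x)) = (⇑f)^[n] x)
    (hper : ∃ x : X, ∃ p : ℕ, 1 ≤ p ∧ (⇑f)^[p] x = x)
    (hfaith : ∀ p : ℕ, 1 ≤ p → (⇑f)^[p] ≠ id) :
    ∃ K : Set X, K.Nonempty ∧ IsClosed K ∧ K ≠ Set.univ ∧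
      ⇑f '' K = K ∧ ⇑h '' K = K := by
  obtain ⟨x0, p, hp1, hx0⟩ := hper
  obtain ⟨q, rfl⟩ : ∃ q, p = q + 1 := ⟨p - 1, by omega⟩
  set p := q + 1 with hpdef
  set g := ⇑h.symm with hg
  -- basic commutation: f ∘ g = g ∘ f^[n]
  have comm : ∀ x : X, f (g x) = g ((⇑f)^[n] x) := by
    intro x
    have h1 := hrel x
    have : h.symm (h (f (h.symm x))) = h.symm ((⇑f)^[n] x) := by rw [h1]
    simpa using this
  have comm_iter : ∀ m, ∀ x : X, (⇑f)^[m] (g x) = g ((⇑f)^[n * m] x) := by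
    intro m
    induction m with
    | zero => simp
    | succ m ih =>
      intro x
      have harith : n * m + n = n * (m + 1) := by ring
      rw [Function.iterate_succ_apply, comm, ih, ← Function.iterate_add_apply, harith]
  have comm_pow : ∀ k, ∀ x : X, f (g^[k] x) = g^[k] ((⇑f)^[n ^ k] x) := by
    intro k
    induction k with
    | zero => simp
    | succ k ih =>
      intro x
      calc f (g^[k + 1] x) = f (g^[k] (g x)) := by rw [Function.iterate_succ_apply]
        _ = g^[k] ((⇑f)^[n ^ k] (g x)) := ih _
        _ = g^[k] (g ((⇑f)^[n * n ^ k] x)) := by rw [comm_iter]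
        _ = g^[k + 1] ((⇑f)^[n ^ (k + 1)] x) := by
            rw [Function.iterate_succ_apply]
            congr 1
            rw [← pow_succ']
  -- the set of p-periodic points
  set F : Set X := {y | (⇑f)^[p] y = y} with hF
  have hx0F : x0 ∈ F := hx0
  have hFclosed : IsClosed F := isClosed_eq (f.continuous.iterate p) continuous_id
  have hFiter : ∀ m, ∀ y ∈ F, (⇑f)^[m] y ∈ F := by
    intro m y hy
    show (⇑f)^[p] ((⇑f)^[m] y) = (⇑f)^[m] y
    rw [← Function.iterate_add_apply, add_comm, Function.iterate_add_apply, hy]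
  have hFmul : ∀ m, ∀ y ∈ F, (⇑f)^[p * m] y = y := by
    intro m y hy
    rw [Function.iterate_mul]
    exact Function.iterate_fixed hy m
  have hFim : ∀ m, (⇑f)^[m] '' F = F := by
    intro m
    apply Set.Subset.antisymm
    · rintro _ ⟨y, hy, rfl⟩; exact hFiter m y hy
    · intro y hy
      refine ⟨(⇑f)^[m * q] y, hFiter _ y hy, ?_⟩
      rw [← Function.iterate_add_apply]
      have : m + m * q = p * m := by rw [hpdef]; ring
      rw [this]
      exact hFmul m y hy
  have hgF : ∀ y ∈ F, g y ∈ F := by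
    intro y hy
    show (⇑f)^[p] (g y) = g y
    rw [comm_iter, mul_comm, hFmul n y hy]
  -- the decreasing sequence of sets
  set S : ℕ → Set X := fun k => g^[k] '' F with hS
  have hS0 : S 0 = F := by simp [hS]
  have hSsub : ∀ k, S (k + 1) ⊆ S k := by
    intro k
    rw [hS]
    simp only
    rw [Function.iterate_succ, Set.image_comp]
    exact Set.image_mono (fun y ⟨z, hz, hzy⟩ => hzy ▸ hgF z hz)
  have hSne : ∀ k, (S k).Nonempty := fun k => ⟨g^[k] x0, x0, hx0F, rfl⟩
  have hSclosed : ∀ k, IsClosed (S k) := by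
    intro k
    exact ((hFclosed.isCompact).image (h.symm.continuous.iterate k)).isClosed
  -- invariance of each S k under f and f.symm
  have hfS : ∀ k, ⇑f '' S k = S k := by
    intro k
    have hcomp : ⇑f ∘ g^[k] = g^[k] ∘ (⇑f)^[n ^ k] := funext (comm_pow k)
    calc ⇑f '' S k = ⇑f '' (g^[k] '' F) := by rw [hS]
      _ = (⇑f ∘ g^[k]) '' F := (Set.image_comp _ _ _).symm
      _ = (g^[k] ∘ (⇑f)^[n ^ k]) '' F := by rw [hcomp]
      _ = g^[k] '' ((⇑f)^[n ^ k] '' F) := Set.image_comp _ _ _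
      _ = S k := by rw [hFim]
  have hfsymmS : ∀ k, ⇑f.symm '' S k = S k := by
    intro k
    conv_lhs => rw [← hfS k]
    rw [← Set.image_comp]
    simp
  have hgS : ∀ k, g '' S k = S (k + 1) := by
    intro k
    rw [hS]
    simp only
    rw [Function.iterate_succ', Set.image_comp]
  -- the invariant set
  refine ⟨⋂ k, S k, ?_, isClosed_iInter hSclosed, ?_, ?_, ?_⟩
  · exact IsCompact.nonempty_iInter_of_sequence_nonempty_isCompact_isClosed S hSsub hSne
      ((hSclosed 0).isCompact) hSclosed
  · -- proper
    intro hKuniv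
    have hFuniv : F = Set.univ := by
      apply Set.eq_univ_of_univ_subset
      rw [← hKuniv, ← hS0]
      exact Set.iInter_subset S 0
    apply hfaith p hp1
    funext y
    have : y ∈ F := hFuniv ▸ Set.mem_univ y
    exact this
  · -- f-invariance
    apply Set.Subset.antisymm
    · rintro _ ⟨y, hy, rfl⟩
      simp only [Set.mem_iInter] at hy ⊢
      intro k
      rw [← hfS k]
      exact ⟨y, hy k, rfl⟩
    · intro y hy
      simp only [Set.mem_iInter] at hy
      refine ⟨f.symm y, ?_, by simp⟩
      simp only [Set.mem_iInter]
      intro k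
      rw [← hfsymmS k]
      exact ⟨y, hy k, rfl⟩
  · -- h-invariance
    apply Set.Subset.antisymm
    · rintro _ ⟨y, hy, rfl⟩
      simp only [Set.mem_iInter] at hy ⊢
      intro k
      have : y ∈ S (k + 1) := hy (k + 1)
      rw [← hgS k] at this
      obtain ⟨z, hz, hzy⟩ := this
      have : h y = z := by rw [← hzy]; simp [hg]
      rw [this]
      exact hz
    · intro y hy
      simp only [Set.mem_iInter] at hy
      refine ⟨g y, ?_, by simp [hg]⟩
      simp only [Set.mem_iInter]
      intro k
      exact hSsub k (hgS k ▸ ⟨y, hy k, rfl⟩)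
end

section
/- Let X be a nonempty compact metric space, n ≥ 2 an integer, and f, h : X → X homeomorphisms satisfying h ∘ f ∘ h⁻¹ = fⁿ. Assume that every f-invariant Borel probability measure μ on X has support contained in fix(f). Then every BS-minimal set is contained in fix(f), and moreover every BS-minimal set is an h-minimal set. -/
open MeasureTheory Topology

/-- The topological support of a measure: points all of whose neighborhoods have
positive measure. -/
def measSupport {X : Type*} [TopologicalSpace X] [MeasurableSpace X]
    (μ : Measure X) : Set X :=
  {x | ∀ U ∈ 𝓝 x, 0 < μ U}

section Aux

open MeasureTheory Topology Filter Set BoundedContinuousFunction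

variable {X : Type*} [MetricSpace X]

/-- Helper constructor for bounded continuous `ℝ≥0`-valued functions. -/
noncomputable def mkNN (v : X → NNReal) (hc : Continuous v) (C : NNReal) (hb : ∀ x, v x ≤ C) :
    X →ᵇ NNReal where
  toFun := v
  continuous_toFun := hc
  map_bounded' := by
    refine ⟨2 * C, fun x y => ?_⟩
    rw [NNReal.dist_eq]
    have h1 := hb x; have h2 := hb y
    have h1' : (v x : ℝ) ≤ C := h1
    have h2' : (v y : ℝ) ≤ C := h2
    have p1 : (0:ℝ) ≤ v x := (v x).coe_nonneg
    have p2 : (0:ℝ) ≤ v y := (v y).coe_nonneg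
    rw [abs_le]; constructor <;> nlinarith [C.coe_nonneg]

@[simp] lemma mkNN_apply (v : X → NNReal) (hc : Continuous v) (C : NNReal)
    (hb : ∀ x, v x ≤ C) (x : X) : mkNN v hc C hb x = v x := rfl

/-- Birkhoff average (over `N+1` points) of a bounded continuous function along an orbit. -/
noncomputable def birkAvg (f : X → X) (x₀ : X) (N : ℕ) (φ : X →ᵇ NNReal) : NNReal :=
  (∑ k ∈ Finset.range (N + 1), φ (f^[k] x₀)) / (N + 1 : NNReal)

lemma exists_bound (φ : X →ᵇ NNReal) : ∃ C : NNReal, ∀ x, φ x ≤ C := by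
  rcases isEmpty_or_nonempty X with hX | hX
  · exact ⟨0, fun x => (IsEmpty.false x).elim⟩
  · obtain ⟨y₀⟩ := hX
    obtain ⟨C, hC⟩ := φ.bounded
    refine ⟨φ y₀ + Real.toNNReal C, fun x => ?_⟩
    have hd := hC x y₀
    rw [NNReal.dist_eq] at hd
    have := abs_le.mp hd
    have hx : (φ x : ℝ) ≤ (φ y₀ : ℝ) + C := by linarith [this.2]
    have : (φ x : ℝ) ≤ ((φ y₀ + Real.toNNReal C : NNReal) : ℝ) := by
      push_cast
      calc (φ x : ℝ) ≤ (φ y₀ : ℝ) + C := hx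
        _ ≤ (φ y₀ : ℝ) + max C 0 := by simp [le_max_left]
        _ = (φ y₀ : ℝ) + Real.toNNReal C := by rw [Real.coe_toNNReal']
    exact_mod_cast this

lemma birkAvg_le (f : X → X) (x₀ : X) (N : ℕ) (φ : X →ᵇ NNReal) {C : NNReal}
    (hb : ∀ x, φ x ≤ C) : birkAvg f x₀ N φ ≤ C := by
  have hpos : (0:NNReal) < (N : NNReal) + 1 := by positivity
  rw [birkAvg, div_le_iff₀ hpos]
  calc ∑ k ∈ Finset.range (N + 1), φ (f^[k] x₀)
      ≤ ∑ _k ∈ Finset.range (N + 1), C := Finset.sum_le_sum fun k _ => hb _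
    _ = C * (N + 1) := by simp [mul_comm, mul_add]
    _ = C * ((N : NNReal) + 1) := by norm_cast

lemma birkAvg_add (f : X → X) (x₀ : X) (N : ℕ) (φ ψ : X →ᵇ NNReal) :
    birkAvg f x₀ N (φ + ψ) = birkAvg f x₀ N φ + birkAvg f x₀ N ψ := by
  simp [birkAvg, Finset.sum_add_distrib, add_div]

lemma birkAvg_smul (f : X → X) (x₀ : X) (N : ℕ) (c : NNReal) (φ : X →ᵇ NNReal) :
    birkAvg f x₀ N (c • φ) = c * birkAvg f x₀ N φ := by
  simp only [birkAvg, BoundedContinuousFunction.coe_smul, smul_eq_mul, Function.comp_apply]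
  rw [← Finset.mul_sum, mul_div_assoc]

lemma birkAvg_mono (f : X → X) (x₀ : X) (N : ℕ) (φ ψ : X →ᵇ NNReal)
    (hle : ∀ x, φ x ≤ ψ x) : birkAvg f x₀ N φ ≤ birkAvg f x₀ N ψ := by
  unfold birkAvg
  gcongr
  exact hle _

lemma birkAvg_one (f : X → X) (x₀ : X) (N : ℕ) :
    birkAvg f x₀ N (1 : X →ᵇ NNReal) = 1 := by
  have hpos : ((N : NNReal) + 1) ≠ 0 := by positivity
  simp [birkAvg, div_self hpos]

lemma birkAvg_shift (f : X → X) (hf : Continuous f) (x₀ : X) (N : ℕ) (φ : X →ᵇ NNReal) :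
    birkAvg f x₀ N (φ.compContinuous ⟨f, hf⟩) + φ x₀ / ((N : NNReal) + 1) =
      birkAvg f x₀ N φ + φ (f^[N + 1] x₀) / ((N : NNReal) + 1) := by
  unfold birkAvg
  rw [← add_div, ← add_div]
  congr 1
  have hl : ∀ k, (φ.compContinuous (⟨f, hf⟩ : C(X, X))) (f^[k] x₀) = φ (f^[k + 1] x₀) := by
    intro k
    rw [BoundedContinuousFunction.compContinuous_apply]
    rw [ContinuousMap.coe_mk, ← Function.iterate_succ_apply' f k x₀]
  have A := Finset.sum_range_succ (fun k => φ (f^[k] x₀)) (N + 1)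
  have B := Finset.sum_range_succ' (fun k => φ (f^[k] x₀)) (N + 1)
  simp only [Function.iterate_zero_apply] at B
  simp only [hl]
  rw [← B, A]

lemma iterate_mem (f : X → X) (M : Set X) (hfM : f '' M = M) (x₀ : X) (hx₀ : x₀ ∈ M) (k : ℕ) :
    f^[k] x₀ ∈ M := by
  induction k with
  | zero => simpa
  | succ k ih =>
      rw [Function.iterate_succ_apply']
      rw [← hfM]
      exact ⟨_, ih, rfl⟩

namespace Old

noncomputable def rieszContentAux (Λ : (X →ᵇ NNReal) →ₗ[NNReal] NNReal) :
    TopologicalSpace.Compacts X → NNReal := fun K =>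
  sInf (Λ '' { f : X →ᵇ NNReal | ∀ x ∈ K, (1 : NNReal) ≤ f x })

theorem rieszContentAux_image_nonempty (Λ : (X →ᵇ NNReal) →ₗ[NNReal] NNReal)
    (K : TopologicalSpace.Compacts X) :
    (Λ '' { f : X →ᵇ NNReal | ∀ x ∈ K, (1 : NNReal) ≤ f x }).Nonempty :=
  ⟨Λ 1, 1, fun x _ => by simp, rfl⟩

theorem rieszContentAux_mono (Λ : (X →ᵇ NNReal) →ₗ[NNReal] NNReal)
    {K₁ K₂ : TopologicalSpace.Compacts X} (h : K₁ ≤ K₂) :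
    rieszContentAux Λ K₁ ≤ rieszContentAux Λ K₂ :=
  csInf_le_csInf (OrderBot.bddBelow _) (rieszContentAux_image_nonempty Λ K₂)
    (Set.image_mono fun f hf x hx => hf x (h hx))

theorem rieszContentAux_le (Λ : (X →ᵇ NNReal) →ₗ[NNReal] NNReal)
    {K : TopologicalSpace.Compacts X} {f : X →ᵇ NNReal}
    (h : ∀ x ∈ K, (1 : NNReal) ≤ f x) : rieszContentAux Λ K ≤ Λ f :=
  csInf_le (OrderBot.bddBelow _) ⟨f, ⟨h, rfl⟩⟩

theorem exists_lt_rieszContentAux_add_pos (Λ : (X →ᵇ NNReal) →ₗ[NNReal] NNReal)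
    (K : TopologicalSpace.Compacts X) {ε : NNReal} (εpos : 0 < ε) :
    ∃ f : X →ᵇ NNReal, (∀ x ∈ K, (1 : NNReal) ≤ f x) ∧ Λ f < rieszContentAux Λ K + ε := by
  obtain ⟨α, ⟨⟨f, f_hyp⟩, α_hyp⟩⟩ :=
    exists_lt_of_csInf_lt (rieszContentAux_image_nonempty Λ K)
      (lt_add_of_pos_right (rieszContentAux Λ K) εpos)
  refine ⟨f, f_hyp.left, ?_⟩
  rw [f_hyp.right]
  exact α_hyp

theorem rieszContentAux_sup_le (Λ : (X →ᵇ NNReal) →ₗ[NNReal] NNReal)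
    (K1 K2 : TopologicalSpace.Compacts X) :
    rieszContentAux Λ (K1 ⊔ K2) ≤ rieszContentAux Λ K1 + rieszContentAux Λ K2 := by
  apply _root_.le_of_forall_pos_le_add
  intro ε εpos
  obtain ⟨f1, hf1⟩ := exists_lt_rieszContentAux_add_pos Λ K1 (half_pos εpos)
  obtain ⟨f2, hf2⟩ := exists_lt_rieszContentAux_add_pos Λ K2 (half_pos εpos)
  have hu : ∀ x ∈ K1 ⊔ K2, (1 : NNReal) ≤ (f1 + f2) x := by
    rintro x (x_in_K1 | x_in_K2)
    · rw [BoundedContinuousFunction.add_apply]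
      exact le_add_right (hf1.left x x_in_K1)
    · rw [BoundedContinuousFunction.add_apply]
      exact le_add_left (hf2.left x x_in_K2)
  apply (rieszContentAux_le Λ hu).trans (le_of_lt _)
  rw [map_add]
  calc Λ f1 + Λ f2 < rieszContentAux Λ K1 + ε / 2 + (rieszContentAux Λ K2 + ε / 2) :=
        add_lt_add hf1.2 hf2.2
    _ = rieszContentAux Λ K1 + rieszContentAux Λ K2 + ε := by
        rw [add_add_add_comm, add_halves]

theorem exists_invariant_prob [CompactSpace X] [MeasurableSpace X] [BorelSpace X]
    (f : X ≃ₜ X) (M : Set X) (hMc : IsClosed M) (x₀ : X) (hx₀ : x₀ ∈ M)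
    (hfM : ⇑f '' M = M) :
    ∃ μ : Measure X, IsProbabilityMeasure μ ∧
      (∀ s : Set X, MeasurableSet s → μ (⇑f ⁻¹' s) = μ s) ∧ μ Mᶜ = 0 := by
  classical
  set 𝒰 : Ultrafilter ℕ := Ultrafilter.of Filter.atTop with h𝒰def
  have h𝒰 : (𝒰 : Filter ℕ) ≤ Filter.atTop := Ultrafilter.of_le _
  -- limits of Birkhoff averages along the ultrafilter
  have hlim : ∀ φ : X →ᵇ NNReal, ∃ L, Tendsto (fun N => birkAvg (⇑f) x₀ N φ) 𝒰 (𝓝 L) := by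
    intro φ
    obtain ⟨C, hC⟩ := exists_bound φ
    have hmem : (𝒰.map fun N => birkAvg (⇑f) x₀ N φ : Filter NNReal) ≤ 𝓟 (Set.Icc 0 C) := by
      rw [le_principal_iff]
      exact Filter.mem_map.mpr (Filter.Eventually.of_forall
        fun N => ⟨zero_le, birkAvg_le _ _ _ _ hC⟩)
    obtain ⟨L, _, hL⟩ := isCompact_Icc.ultrafilter_le_nhds _ hmem
    exact ⟨L, hL⟩
  choose Λ hΛ using hlim
  -- elementary properties of Λ
  have hadd : ∀ φ ψ, Λ (φ + ψ) = Λ φ + Λ ψ := by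
    intro φ ψ
    refine tendsto_nhds_unique (hΛ (φ + ψ)) ?_
    exact Filter.Tendsto.congr (fun N => (birkAvg_add (⇑f) x₀ N φ ψ).symm)
      ((hΛ φ).add (hΛ ψ))
  have hsmul : ∀ (c : NNReal) φ, Λ (c • φ) = c * Λ φ := by
    intro c φ
    refine tendsto_nhds_unique (hΛ (c • φ)) ?_
    exact Filter.Tendsto.congr (fun N => (birkAvg_smul (⇑f) x₀ N c φ).symm)
      (Filter.Tendsto.const_mul c (hΛ φ))
  have hone : Λ 1 = 1 :=
    tendsto_nhds_unique (hΛ 1)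
      (Filter.Tendsto.congr (fun N => (birkAvg_one (⇑f) x₀ N).symm) tendsto_const_nhds)
  have hmono : ∀ φ ψ : X →ᵇ NNReal, (∀ x, φ x ≤ ψ x) → Λ φ ≤ Λ ψ := by
    intro φ ψ hle
    exact le_of_tendsto_of_tendsto' (hΛ φ) (hΛ ψ) fun N => birkAvg_mono _ _ _ _ _ hle
  have hΛext : ∀ φ ψ : X →ᵇ NNReal, (∀ x, φ x = ψ x) → Λ φ = Λ ψ := fun φ ψ hp =>
    le_antisymm (hmono _ _ fun x => (hp x).le) (hmono _ _ fun x => (hp x).ge)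
  have hzeroM : ∀ φ : X →ᵇ NNReal, (∀ y ∈ M, φ y = 0) → Λ φ = 0 := by
    intro φ hφ
    refine tendsto_nhds_unique (hΛ φ) ?_
    have : ∀ N, birkAvg (⇑f) x₀ N φ = 0 := by
      intro N
      unfold birkAvg
      rw [Finset.sum_eq_zero, zero_div]
      intro k _
      exact hφ _ (iterate_mem (⇑f) M hfM x₀ hx₀ k)
    exact Filter.Tendsto.congr (fun N => (this N).symm) tendsto_const_nhds
  -- invariance of Λ
  have hzseq : ∀ (C : NNReal), Tendsto (fun N : ℕ => C / ((N : NNReal) + 1)) Filter.atTop (𝓝 0) := by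
    intro C
    rw [← NNReal.tendsto_coe]
    push_cast
    have h1 : Tendsto (fun n : ℕ => (C : ℝ) / n) Filter.atTop (𝓝 0) :=
      tendsto_const_div_atTop_nhds_zero_nat (C : ℝ)
    have h2 : Tendsto (fun N : ℕ => N + 1) Filter.atTop Filter.atTop :=
      Filter.tendsto_add_atTop_nat 1
    have := h1.comp h2
    refine this.congr fun N => ?_
    simp [Function.comp]
  have hdiv0 : ∀ (φ : X →ᵇ NNReal) (g : ℕ → X),
      Tendsto (fun N : ℕ => φ (g N) / ((N : NNReal) + 1)) 𝒰 (𝓝 0) := by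
    intro φ g
    obtain ⟨C, hC⟩ := exists_bound φ
    have hb : ∀ N : ℕ, φ (g N) / ((N : NNReal) + 1) ≤ C / ((N : NNReal) + 1) := by
      intro N
      gcongr
      exact hC _
    have := tendsto_of_tendsto_of_tendsto_of_le_of_le tendsto_const_nhds (hzseq C)
      (fun N => zero_le) hb
    exact this.mono_left h𝒰
  have hinvΛ : ∀ φ : X →ᵇ NNReal,
      Λ (φ.compContinuous ⟨⇑f, f.continuous⟩) = Λ φ := by
    intro φ
    have t1 : Tendsto (fun N => birkAvg (⇑f) x₀ N (φ.compContinuous ⟨⇑f, f.continuous⟩) +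
        φ x₀ / ((N : NNReal) + 1)) 𝒰 (𝓝 (Λ (φ.compContinuous ⟨⇑f, f.continuous⟩) + 0)) :=
      (hΛ _).add (hdiv0 φ fun _ => x₀)
    have t2 : Tendsto (fun N => birkAvg (⇑f) x₀ N (φ.compContinuous ⟨⇑f, f.continuous⟩) +
        φ x₀ / ((N : NNReal) + 1)) 𝒰 (𝓝 (Λ φ + 0)) := by
      refine Filter.Tendsto.congr (fun N => ?_) ((hΛ φ).add (hdiv0 φ fun N => (⇑f)^[N + 1] x₀))
      exact (birkAvg_shift (⇑f) f.continuous x₀ N φ).symm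
    have := tendsto_nhds_unique t1 t2
    simpa using this
  -- the linear functional
  set Λₗ : (X →ᵇ NNReal) →ₗ[NNReal] NNReal :=
    { toFun := Λ
      map_add' := hadd
      map_smul' := by intro c φ; simpa using hsmul c φ } with hΛₗdef
  have hinvΛₗ : ∀ φ : X →ᵇ NNReal,
      Λₗ (φ.compContinuous ⟨⇑f, f.continuous⟩) = Λₗ φ := hinvΛ
  have honeₗ : Λₗ (1 : X →ᵇ NNReal) = 1 := hone
  -- disjoint additivity of the Riesz content, via Urysohn's lemma
  have hsd : ∀ K₁ K₂ : TopologicalSpace.Compacts X, Disjoint (K₁ : Set X) (K₂ : Set X) →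
      rieszContentAux Λₗ (K₁ ⊔ K₂) = rieszContentAux Λₗ K₁ + rieszContentAux Λₗ K₂ := by
    intro K₁ K₂ hdisj
    refine le_antisymm (rieszContentAux_sup_le Λₗ K₁ K₂) ?_
    refine le_csInf (rieszContentAux_image_nonempty Λₗ (K₁ ⊔ K₂)) ?_
    rintro b ⟨g, hg, rfl⟩
    obtain ⟨u, hu₁, hu₂, hu01⟩ := exists_continuous_zero_one_of_isClosed
      K₁.isCompact.isClosed K₂.isCompact.isClosed hdisj
    obtain ⟨C, hC⟩ := exists_bound g
    have ht1 : ∀ x : X, Real.toNNReal (1 - u x) ≤ 1 := by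
      intro x
      have := (hu01 x).1
      calc Real.toNNReal (1 - u x) ≤ Real.toNNReal 1 := Real.toNNReal_mono (by linarith)
        _ = 1 := Real.toNNReal_one
    have ht2 : ∀ x : X, Real.toNNReal (u x) ≤ 1 := by
      intro x
      have := (hu01 x).2
      calc Real.toNNReal (u x) ≤ Real.toNNReal 1 := Real.toNNReal_mono (by linarith)
        _ = 1 := Real.toNNReal_one
    set v₁ : X →ᵇ NNReal := mkNN (fun x => g x * Real.toNNReal (1 - u x))
      (g.continuous.mul (continuous_real_toNNReal.comp (continuous_const.sub u.continuous))) C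
      (fun x => by
        calc g x * Real.toNNReal (1 - u x) ≤ C * 1 := mul_le_mul' (hC x) (ht1 x)
          _ = C := mul_one C) with hv₁def
    set v₂ : X →ᵇ NNReal := mkNN (fun x => g x * Real.toNNReal (u x))
      (g.continuous.mul (continuous_real_toNNReal.comp u.continuous)) C
      (fun x => by
        calc g x * Real.toNNReal (u x) ≤ C * 1 := mul_le_mul' (hC x) (ht2 x)
          _ = C := mul_one C) with hv₂def
    have hv : Λₗ (v₁ + v₂) = Λₗ g := by
      refine hΛext _ _ fun x => ?_
      rw [BoundedContinuousFunction.add_apply]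
      show g x * Real.toNNReal (1 - u x) + g x * Real.toNNReal (u x) = g x
      rw [← mul_add, ← Real.toNNReal_add (by linarith [(hu01 x).2]) (hu01 x).1]
      norm_num
    have h₁ : rieszContentAux Λₗ K₁ ≤ Λₗ v₁ := by
      refine rieszContentAux_le Λₗ fun x hx => ?_
      have hgx : 1 ≤ g x := hg x (by
        have : (K₁ : Set X) ⊆ (K₁ ⊔ K₂ : TopologicalSpace.Compacts X) :=
          Set.subset_union_left
        exact this hx)
      have hux : u x = 0 := hu₁ hx
      show 1 ≤ g x * Real.toNNReal (1 - u x)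
      rw [hux]
      norm_num
      exact hgx
    have h₂ : rieszContentAux Λₗ K₂ ≤ Λₗ v₂ := by
      refine rieszContentAux_le Λₗ fun x hx => ?_
      have hgx : 1 ≤ g x := hg x (by
        have : (K₂ : Set X) ⊆ (K₁ ⊔ K₂ : TopologicalSpace.Compacts X) :=
          Set.subset_union_right
        exact this hx)
      have hux : u x = 1 := hu₂ hx
      show 1 ≤ g x * Real.toNNReal (u x)
      rw [hux]
      norm_num
      exact hgx
    calc rieszContentAux Λₗ K₁ + rieszContentAux Λₗ K₂ ≤ Λₗ v₁ + Λₗ v₂ := add_le_add h₁ h₂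
      _ = Λₗ (v₁ + v₂) := (map_add Λₗ v₁ v₂).symm
      _ = Λₗ g := hv
  -- the content associated to Λₗ
  set c : MeasureTheory.Content X :=
    { toFun := fun K => rieszContentAux Λₗ K
      mono' := fun K₁ K₂ hK => rieszContentAux_mono Λₗ hK
      sup_disjoint' := fun K₁ K₂ hd _ _ => hsd K₁ K₂ hd
      sup_le' := rieszContentAux_sup_le Λₗ } with hcdef
  have hctoFun : ∀ K : TopologicalSpace.Compacts X, c.toFun K = rieszContentAux Λₗ K :=
    fun K => by rw [hcdef]
  have hcapp : ∀ K : TopologicalSpace.Compacts X, c K = (c.toFun K : ENNReal) := fun K => rfl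
  -- invariance of the content under f
  have hKinv' : ∀ K : TopologicalSpace.Compacts X,
      rieszContentAux Λₗ (K.map ⇑f f.continuous) = rieszContentAux Λₗ K := by
    intro K
    apply le_antisymm
    · refine le_csInf (rieszContentAux_image_nonempty Λₗ K) ?_
      rintro b ⟨g, hg, rfl⟩
      have hle : rieszContentAux Λₗ (K.map ⇑f f.continuous) ≤
          Λₗ (g.compContinuous ⟨⇑f.symm, f.symm.continuous⟩) := by
        refine rieszContentAux_le Λₗ fun y hy => ?_
        obtain ⟨x, hx, rfl⟩ := hy
        rw [BoundedContinuousFunction.compContinuous_apply]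
        show 1 ≤ g (f.symm (f x))
        rw [f.symm_apply_apply]
        exact hg x hx
      have heq : Λₗ ((g.compContinuous ⟨⇑f.symm, f.symm.continuous⟩).compContinuous
          ⟨⇑f, f.continuous⟩) = Λₗ g := by
        refine hΛext _ _ fun x => ?_
        simp only [BoundedContinuousFunction.compContinuous_apply]
        show g (f.symm (f x)) = g x
        rw [f.symm_apply_apply]
      have := hinvΛₗ (g.compContinuous ⟨⇑f.symm, f.symm.continuous⟩)
      rw [heq] at this
      rw [this]
      exact hle
    · refine le_csInf (rieszContentAux_image_nonempty Λₗ (K.map ⇑f f.continuous)) ?_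
      rintro b ⟨g, hg, rfl⟩
      have hle : rieszContentAux Λₗ K ≤ Λₗ (g.compContinuous ⟨⇑f, f.continuous⟩) := by
        refine rieszContentAux_le Λₗ fun x hx => ?_
        rw [BoundedContinuousFunction.compContinuous_apply]
        exact hg (f x) ⟨x, hx, rfl⟩
      rwa [hinvΛₗ g] at hle
  have hKinv : ∀ ⦃K : TopologicalSpace.Compacts X⦄,
      c (K.map ⇑f f.continuous) = c K := by
    intro K
    rw [hcapp, hcapp,
      hctoFun, hctoFun, hKinv' K]
  -- the measure
  refine ⟨c.measure, ⟨?_⟩, ?_, ?_⟩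
  · -- probability
    rw [c.measure_apply MeasurableSet.univ,
      c.outerMeasure_of_isOpen Set.univ isOpen_univ,
      c.innerContent_of_isCompact isCompact_univ isOpen_univ]
    have : rieszContentAux Λₗ ⟨Set.univ, isCompact_univ⟩ = 1 := by
      apply le_antisymm
      · refine csInf_le (OrderBot.bddBelow _) ⟨1, fun x _ => le_refl 1, honeₗ⟩
      · refine le_csInf (rieszContentAux_image_nonempty Λₗ _) ?_
        rintro b ⟨g, hg, rfl⟩
        rw [← honeₗ]
        exact hmono 1 g fun x => hg x (Set.mem_univ x)
    rw [hcapp, hctoFun, this]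
    norm_num
  · -- invariance
    intro s hs
    rw [c.measure_apply (hs.preimage f.continuous.measurable), c.measure_apply hs,
      c.outerMeasure_preimage f hKinv s]
  · -- vanishing outside M
    rw [c.measure_apply hMc.measurableSet.compl,
      c.outerMeasure_of_isOpen Mᶜ hMc.isOpen_compl]
    refine le_antisymm ?_ (zero_le)
    rw [MeasureTheory.Content.innerContent]
    refine iSup₂_le fun K hK => ?_
    have hzero : rieszContentAux Λₗ K = 0 := by
      have hdisj : Disjoint M (K : Set X) := by
        rw [Set.disjoint_left]
        intro a haM haK
        exact (hK haK) haM
      obtain ⟨u, hu₁, hu₂, hu01⟩ := exists_continuous_zero_one_of_isClosed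
        hMc K.isCompact.isClosed hdisj
      set w : X →ᵇ NNReal := mkNN (fun x => Real.toNNReal (u x))
        (continuous_real_toNNReal.comp u.continuous) 1
        (fun x => by
          calc Real.toNNReal (u x) ≤ Real.toNNReal 1 := Real.toNNReal_mono (hu01 x).2
            _ = 1 := Real.toNNReal_one) with hwdef
      have h1 : rieszContentAux Λₗ K ≤ Λₗ w := by
        refine rieszContentAux_le Λₗ fun x hx => ?_
        show 1 ≤ Real.toNNReal (u x)
        rw [hu₂ hx]
        norm_num
      have h2 : Λₗ w = 0 := by
        refine hzeroM w fun y hy => ?_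
        show Real.toNNReal (u y) = 0
        rw [hu₁ hy]
        norm_num
      exact le_antisymm (h1.trans_eq h2) (zero_le)
    rw [hcapp, hctoFun, hzero]
    norm_num
end Old

open Old

theorem measSupport_nonempty' [CompactSpace X] [MeasurableSpace X]
    (μ : MeasureTheory.Measure X) (hprob : MeasureTheory.IsProbabilityMeasure μ) :
    (setOf fun x : X => ∀ U ∈ 𝓝 x, 0 < μ U).Nonempty := by
  by_contra hne
  rw [Set.not_nonempty_iff_eq_empty, Set.eq_empty_iff_forall_notMem] at hne
  have hex : ∀ x : X, ∃ U : Set X, IsOpen U ∧ x ∈ U ∧ μ U = 0 := by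
    intro x
    have hx : ¬ ∀ U ∈ 𝓝 x, 0 < μ U := hne x
    simp only [Set.mem_setOf_eq, not_forall] at hx
    obtain ⟨U, hU, hU0⟩ := hx
    obtain ⟨V, hVU, hVopen, hxV⟩ := mem_nhds_iff.mp hU
    refine ⟨V, hVopen, hxV, le_antisymm ?_ (zero_le)⟩
    calc μ V ≤ μ U := measure_mono hVU
      _ = 0 := by simpa using not_lt.mp hU0
  choose U hUopen hxU hU0 using hex
  obtain ⟨t, ht⟩ := isCompact_univ.elim_nhds_subcover U
    (fun x _ => (hUopen x).mem_nhds (hxU x))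
  have h0 : μ Set.univ = 0 := by
    refine le_antisymm ?_ (zero_le)
    calc μ Set.univ ≤ μ (⋃ x ∈ t, U x) := measure_mono ht.2
      _ ≤ ∑ x ∈ t, μ (U x) := measure_biUnion_finset_le t U
      _ = 0 := Finset.sum_eq_zero fun x _ => hU0 x
  rw [hprob.measure_univ] at h0
  exact one_ne_zero h0

end Aux

open Old

/-- if every `f`-invariant Borel probability measure has support contained
in `fix(f)`, then every BS-minimal set is contained in `fix(f)` and is an `h`-minimal
set. -/
theorem bs_minimal_sets_in_fix_of_measure_condition
    {X : Type*} [MetricSpace X] [CompactSpace X] [Nonempty X]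
    [MeasurableSpace X] [BorelSpace X]
    (n : ℕ) (hn : 2 ≤ n) (f h : X ≃ₜ X)
    (hrel : ∀ x : X, h (f (h.symm x)) = (⇑f)^[n] x)
    (hsupp : ∀ μ : Measure X, IsProbabilityMeasure μ →
      (∀ s : Set X, MeasurableSet s → μ (⇑f ⁻¹' s) = μ s) →
      measSupport μ ⊆ {x : X | f x = x}) :
    ∀ M : Set X, IsBSMinimal (⇑f) (⇑h) M →
      M ⊆ {x : X | f x = x} ∧ IsMinimalFor (⇑h) M := by
  intro M hM
  obtain ⟨hMne, hMc, hfMeq, hhMeq, hmin⟩ := hM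
  have hfix : M ⊆ {x : X | f x = x} := by
    obtain ⟨x₀, hx₀⟩ := hMne
    obtain ⟨μ, hprob, hinv, hμMc⟩ := exists_invariant_prob f M hMc x₀ hx₀ hfMeq
    have hsub := hsupp μ hprob hinv
    have hsuppM : measSupport μ ⊆ M := by
      intro x hx
      by_contra hxM
      have h0 : 0 < μ Mᶜ := hx Mᶜ (hMc.isOpen_compl.mem_nhds hxM)
      rw [hμMc] at h0
      exact lt_irrefl _ h0
    obtain ⟨z, hz⟩ := measSupport_nonempty' μ hprob
    have hz' : z ∈ measSupport μ := hz
    set F : Set X := M ∩ {x | f x = x} with hFdef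
    have hFne : F.Nonempty := ⟨z, hsuppM hz', hsub hz'⟩
    have hFc : IsClosed F := hMc.inter (isClosed_eq f.continuous continuous_id)
    have hFM : F ⊆ M := Set.inter_subset_left
    have hpre : ⇑h ⁻¹' F ⊆ F := by
      intro x hx
      obtain ⟨hx1, hx2⟩ := hx
      have hx2' : f (h x) = h x := hx2
      constructor
      · rw [← hhMeq] at hx1
        obtain ⟨m, hm, hmx⟩ := hx1
        rwa [← h.injective hmx]
      · have hit : (⇑f)^[n] (h x) = h x := Function.iterate_fixed hx2' n
        have := hrel (h x)
        rw [h.symm_apply_apply, hit] at this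
        exact h.injective this
    set S : ℕ → Set X := fun k => (⇑h)^[k] ⁻¹' F with hSdef
    have hScl : ∀ k, IsClosed (S k) := fun k => hFc.preimage (h.continuous.iterate k)
    have hSne : ∀ k, (S k).Nonempty := by
      intro k
      obtain ⟨y, hy⟩ := hFne
      refine ⟨(⇑h.symm)^[k] y, ?_⟩
      have hli : Function.LeftInverse ⇑h ⇑h.symm := h.apply_symm_apply
      show (⇑h)^[k] ((⇑h.symm)^[k] y) ∈ F
      rw [hli.iterate k y]
      exact hy
    have hSdec : ∀ k, S (k + 1) ⊆ S k := by
      intro k x hx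
      have hx' : (⇑h)^[k + 1] x ∈ F := hx
      rw [Function.iterate_succ_apply'] at hx'
      exact hpre hx'
    set K : Set X := ⋂ k, S k with hKdef
    have hKne : K.Nonempty := by
      refine IsCompact.nonempty_iInter_of_sequence_nonempty_isCompact_isClosed S hSdec hSne
        ?_ hScl
      exact (hScl 0).isCompact
    have hKF : K ⊆ F := fun x hx => by
      have := Set.mem_iInter.mp hx 0
      simpa [hSdef] using this
    have hKfix : ∀ x ∈ K, f x = x := fun x hx => (hKF hx).2
    have hKM : K ⊆ M := fun x hx => (hKF hx).1
    have hKcl : IsClosed K := isClosed_iInter hScl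
    have hfK : ⇑f '' K = K := by
      apply Set.ext
      intro y
      constructor
      · rintro ⟨x, hx, rfl⟩
        rwa [hKfix x hx]
      · intro hy
        exact ⟨y, hy, hKfix y hy⟩
    have hpreK : ⇑h ⁻¹' K = K := by
      apply le_antisymm
      · intro x hx
        rw [Set.mem_preimage] at hx
        apply Set.mem_iInter.mpr
        intro k
        show (⇑h)^[k] x ∈ F
        rcases k with _ | k
        · have : h x ∈ F := Set.mem_iInter.mp hx 0
          exact hpre this
        · have hk := Set.mem_iInter.mp hx k
          show (⇑h)^[k + 1] x ∈ F
          rw [Function.iterate_succ_apply]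
          exact hk
      · intro x hx
        rw [Set.mem_preimage]
        apply Set.mem_iInter.mpr
        intro k
        have := Set.mem_iInter.mp hx (k + 1)
        show (⇑h)^[k] (h x) ∈ F
        rw [← Function.iterate_succ_apply]
        exact this
    have hhK : ⇑h '' K = K := by
      conv_lhs => rw [← hpreK]
      exact Set.image_preimage_eq K h.surjective
    have hKeqM := hmin K hKM hKne hKcl hfK hhK
    rw [← hKeqM]
    intro x hx
    exact (hKF hx).2
  refine ⟨hfix, hMne, hMc, hhMeq, ?_⟩
  intro K hKM hKne hKcl hhK
  refine hmin K hKM hKne hKcl ?_ hhK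
  have hKfix : ∀ x ∈ K, f x = x := fun x hx => hfix (hKM hx)
  apply Set.ext
  intro y
  constructor
  · rintro ⟨x, hx, rfl⟩
    rwa [hKfix x hx]
  · intro hy
    exact ⟨y, hy, hKfix y hy⟩
end

section
/- Let n ≥ 2 be an integer and let A, B ∈ GL(2, ℤ) satisfy B A B⁻¹ = Aⁿ. Then there exists N ∈ {1, 2, 3, 4, 6} such that A^N is the identity matrix. -/
/-- If conjugating `U` multiplies it by `n ≥ 2`, then `U = 0`
(gcd/divisibility argument on the integer entries). -/
lemma aux_conj_zero (n : ℕ) (hn : 2 ≤ n) (U C C' : Matrix (Fin 2) (Fin 2) ℤ)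
    (hC'C : C' * C = 1)
    (hU : C * U * C' = (n : ℤ) • U) : U = 0 := by
  have hstep : U = (n : ℤ) • (C' * U * C) := by
    have h1 : C' * (C * U * C') * C = C' * ((n : ℤ) • U) * C := by rw [hU]
    have h2 : C' * (C * U * C') * C = (C' * C) * U * (C' * C) := by noncomm_ring
    have h3 : C' * ((n : ℤ) • U) * C = (n : ℤ) • (C' * U * C) := by
      rw [mul_smul_comm, smul_mul_assoc]
    rw [h2, h3, hC'C, one_mul, mul_one] at h1
    exact h1
  have key : ∀ k : ℕ, U = (n : ℤ) ^ k • (C' ^ k * U * C ^ k) := by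
    intro k
    induction k with
    | zero => simp
    | succ k ih =>
      calc U = (n : ℤ) ^ k • (C' ^ k * U * C ^ k) := ih
        _ = (n : ℤ) ^ k • (C' ^ k * ((n : ℤ) • (C' * U * C)) * C ^ k) := by rw [← hstep]
        _ = (n : ℤ) ^ (k+1) • (C' ^ (k+1) * U * C ^ (k+1)) := by
            rw [mul_smul_comm, smul_mul_assoc, smul_smul, ← pow_succ,
              pow_succ C' k, pow_succ' C k]
            congr 1
            noncomm_ring
  have hdvd : ∀ (i j : Fin 2) (k : ℕ), (n : ℤ) ^ k ∣ U i j := by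
    intro i j k
    have := key k
    refine ⟨(C' ^ k * U * C ^ k) i j, ?_⟩
    conv_lhs => rw [this]
    simp
  ext i j
  simp only [Matrix.zero_apply]
  by_contra hx
  set k := (U i j).natAbs with hk
  have h1 : (n : ℤ) ^ k ≤ |U i j| :=
    Int.le_of_dvd (abs_pos.mpr hx) ((dvd_abs _ _).mpr (hdvd i j k))
  have h2 : (2 : ℤ) ^ k ≤ (n : ℤ) ^ k := by
    apply pow_le_pow_left₀ (by norm_num)
    exact_mod_cast hn
  have h3 : |U i j| = (k : ℤ) := by rw [hk, Int.abs_eq_natAbs]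
  have h4 : (k : ℤ) < 2 ^ k := by exact_mod_cast (Nat.lt_two_pow_self : k < 2 ^ k)
  omega

/-- A unipotent element conjugate to its `n`-th power (`n ≥ 2`) is the identity. -/
lemma aux_unipotent (n : ℕ) (hn : 2 ≤ n) (M C C' : Matrix (Fin 2) (Fin 2) ℤ)
    (hC'C : C' * C = 1) (hCC' : C * C' = 1)
    (hrel : C * M * C' = M ^ n)
    (hsq : (M - 1) * (M - 1) = 0) : M = 1 := by
  set U := M - 1 with hUdef
  have hM : M = 1 + U := by rw [hUdef]; abel
  have hU2 : U * U = 0 := hsq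
  have hpow : ∀ k : ℕ, M ^ k = 1 + (k : ℤ) • U := by
    intro k
    induction k with
    | zero => simp
    | succ k ih =>
      rw [pow_succ, ih]
      conv_lhs => rw [hM]
      rw [mul_add, mul_one, add_mul, one_mul, smul_mul_assoc, hU2, smul_zero, add_zero]
      push_cast
      rw [add_smul, one_smul]
      abel
  have hCU : C * U * C' = (n : ℤ) • U := by
    have h1 : C * M * C' = C * C' + C * U * C' := by
      conv_lhs => rw [hM]
      noncomm_ring
    have h2 := hrel
    rw [h1, hCC', hpow n] at h2
    exact add_left_cancel h2
  have : U = 0 := aux_conj_zero n hn U C C' hC'C hCU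
  rw [hUdef] at this
  linear_combination (norm := abel) this

/-- Growth of the trace recursion `r (k+2) = a * r (k+1) - d * r k`. -/
lemma aux_growth (a d : ℤ) (ha : 1 ≤ a) (hcase : d = -1 ∨ (d = 1 ∧ 3 ≤ a))
    (r : ℕ → ℤ) (h0 : r 0 = 2) (h1 : r 1 = a)
    (hrec : ∀ k, r (k+2) = a * r (k+1) - d * r k) :
    ∀ m, a < r (m + 2) := by
  rcases hcase with hd | ⟨hd, ha3⟩
  · -- d = -1 : r (k+2) = a * r (k+1) + r k, all positive, growing
    have pos : ∀ k, 1 ≤ r k ∧ 1 ≤ r (k+1) := by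
      intro k
      induction k with
      | zero =>
        have e : r (0+1) = r 1 := rfl
        constructor <;> omega
      | succ k ih =>
        refine ⟨ih.2, ?_⟩
        have := hrec k
        rw [hd] at this
        have e : r (k+1+1) = r (k+2) := rfl
        nlinarith [ih.1, ih.2]
    intro m
    induction m with
    | zero =>
      have := hrec 0
      rw [hd, h0, h1] at this
      nlinarith
    | succ m ih =>
      have := hrec (m+1)
      rw [hd] at this
      have h1' := (pos (m+1)).1
      nlinarith
  · -- d = 1, a ≥ 3
    have mono : ∀ k, 2 ≤ r (k+1) ∧ r k ≤ r (k+1) := by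
      intro k
      induction k with
      | zero =>
        have e : r (0+1) = r 1 := rfl
        constructor <;> omega
      | succ k ih =>
        have := hrec k
        rw [hd] at this
        have e : r (k+1+1) = r (k+2) := rfl
        constructor <;> nlinarith [ih.1, ih.2]
    intro m
    induction m with
    | zero =>
      have := hrec 0
      rw [hd, h0, h1] at this
      nlinarith
    | succ m ih =>
      have := (mono (m+2)).2
      have e : r (m+1+2) = r (m+2+1) := rfl
      omega

/-- No solution to the trace equations in the growing cases. -/
lemma aux_nogrowth (t d : ℤ) (n : ℕ) (hn : 2 ≤ n) (s : ℕ → ℤ)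
    (h0 : s 0 = 2) (h1 : s 1 = t)
    (hrec : ∀ k, s (k+2) = t * s (k+1) - d * s k)
    (hsn : s n = t)
    (hd : d = 1 ∨ d = -1)
    (hcase : (d = -1 ∧ t ≠ 0) ∨ 3 ≤ |t|) : False := by
  obtain ⟨m, hm⟩ : ∃ m, n = m + 2 := ⟨n - 2, by omega⟩
  rcases le_or_gt 0 t with hts | hts
  · -- t ≥ 0 : use r = s directly, a = t
    have ht1 : 1 ≤ t := by
      rcases hcase with ⟨_, h⟩ | h
      · omega
      · rw [abs_of_nonneg hts] at h; omega
    have hcase' : d = -1 ∨ (d = 1 ∧ 3 ≤ t) := by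
      rcases hcase with ⟨h, _⟩ | h
      · exact Or.inl h
      · rw [abs_of_nonneg hts] at h
        rcases hd with h1 | h1
        · exact Or.inr ⟨h1, h⟩
        · exact Or.inl h1
    have := aux_growth t d ht1 hcase' s h0 h1 hrec m
    rw [← hm, hsn] at this
    omega
  · -- t < 0 : use r k = (-1)^k * s k, a = -t
    set r : ℕ → ℤ := fun k => (-1) ^ k * s k with hr
    have h0' : r 0 = 2 := by simp [hr, h0]
    have h1' : r 1 = -t := by simp [hr, h1]
    have hrec' : ∀ k, r (k+2) = (-t) * r (k+1) - d * r k := by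
      intro k
      simp only [hr]
      rw [hrec k]
      ring
    have ht1 : 1 ≤ -t := by omega
    have hcase' : d = -1 ∨ (d = 1 ∧ 3 ≤ -t) := by
      rcases hcase with ⟨h, _⟩ | h
      · exact Or.inl h
      · rw [abs_of_neg hts] at h
        rcases hd with h1 | h1
        · exact Or.inr ⟨h1, h⟩
        · exact Or.inl h1
    have hgr := aux_growth (-t) d ht1 hcase' r h0' h1' hrec' m
    rw [← hm] at hgr
    have hle : r n ≤ -t := by
      have : |r n| = -t := by
        rw [hr]
        simp only [abs_mul, abs_pow, abs_neg, abs_one, one_pow, one_mul, hsn]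
        exact abs_of_neg hts
      have := le_abs_self (r n)
      omega
    omega

/-- if `A, B ∈ GL(2, ℤ)` satisfy `B A B⁻¹ = Aⁿ` with `n ≥ 2`, then
`A^N = 1` for some `N ∈ {1, 2, 3, 4, 6}`. -/
theorem bs_homology_matrix_finite_order
    (n : ℕ) (hn : 2 ≤ n) (A B : Matrix.GeneralLinearGroup (Fin 2) ℤ)
    (hrel : B * A * B⁻¹ = A ^ n) :
    ∃ N ∈ ({1, 2, 3, 4, 6} : Set ℕ), A ^ N = 1 := by
  set M : Matrix (Fin 2) (Fin 2) ℤ := (A : Matrix (Fin 2) (Fin 2) ℤ) with hMdef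
  set C : Matrix (Fin 2) (Fin 2) ℤ := (B : Matrix (Fin 2) (Fin 2) ℤ) with hCdef
  set C' : Matrix (Fin 2) (Fin 2) ℤ := ((B⁻¹ : Matrix.GeneralLinearGroup (Fin 2) ℤ) : Matrix (Fin 2) (Fin 2) ℤ) with hC'def
  have hC'C : C' * C = 1 := by
    rw [hCdef, hC'def, ← Units.val_mul]
    simp
  have hCC' : C * C' = 1 := by
    rw [hCdef, hC'def, ← Units.val_mul]
    simp
  have hval : C * M * C' = M ^ n := by
    have h := congrArg (Units.val) hrel
    rw [Units.val_mul, Units.val_mul, Units.val_pow_eq_pow_val] at h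
    exact h
  set t : ℤ := Matrix.trace M with htdef
  set d : ℤ := M.det with hddef
  have hCH : M * M = t • M - d • (1 : Matrix (Fin 2) (Fin 2) ℤ) := by
    rw [htdef, hddef]
    ext i j
    fin_cases i <;> fin_cases j <;>
      simp only [Fin.mk_zero, Fin.mk_one, Fin.isValue, Matrix.sub_apply, Matrix.smul_apply,
        smul_eq_mul, Matrix.mul_apply, Fin.sum_univ_two, Matrix.trace_fin_two,
        Matrix.det_fin_two, Matrix.one_fin_two,
        Matrix.cons_val', Matrix.cons_val_zero, Matrix.cons_val_one, Matrix.head_cons,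
        Matrix.empty_val', Matrix.cons_val_fin_one, Matrix.of_apply, Matrix.head_fin_const] <;>
      ring
  have hdet : d = 1 ∨ d = -1 := by
    have hu : IsUnit M := Units.isUnit A
    have := (Matrix.isUnit_iff_isUnit_det M).mp hu
    rwa [← hddef, Int.isUnit_iff] at this
  set s : ℕ → ℤ := fun k => Matrix.trace (M ^ k) with hsdef
  have h0 : s 0 = 2 := by simp [hsdef]
  have h1 : s 1 = t := by simp [hsdef, htdef]
  have hrec : ∀ k, s (k+2) = t * s (k+1) - d * s k := by
    intro k
    have e1 : M ^ (k+2) = M ^ k * (M * M) := by rw [pow_add, pow_two]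
    have e2 : M ^ k * (M * M) = t • M ^ (k+1) - d • M ^ k := by
      rw [hCH, Matrix.mul_sub, mul_smul_comm, mul_smul_comm, mul_one, ← pow_succ]
    simp only [hsdef, e1, e2, Matrix.trace_sub, Matrix.trace_smul, smul_eq_mul]
  have htr : s n = t := by
    simp only [hsdef, htdef]
    rw [← hval, Matrix.trace_mul_cycle, hC'C, one_mul]
  have lift : ∀ N : ℕ, M ^ N = 1 → A ^ N = 1 := by
    intro N h
    apply Units.ext
    rw [Units.val_pow_eq_pow_val, ← hMdef, h]
    rfl
  rcases le_or_gt 3 |t| with hbig | hsmall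
  · exact absurd (aux_nogrowth t d n hn s h0 h1 hrec htr hdet (Or.inr hbig)) (by simp)
  rw [abs_lt] at hsmall
  have htcases : t = -2 ∨ t = -1 ∨ t = 0 ∨ t = 1 ∨ t = 2 := by omega
  rcases hdet with hd1 | hd1
  · rcases htcases with ht | ht | ht | ht | ht
    · -- t = -2, d = 1 : A^2 = 1 via unipotent argument on M^2
      have h2 : M * M = (-2 : ℤ) • M - (1 : ℤ) • 1 := by rw [hCH, hd1, ht]
      have hP : (M + 1) * (M + 1) = 0 := by
        have e : (M + 1) * (M + 1) = M * M + M + M + 1 := by noncomm_ring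
        rw [e, h2]
        abel
      have hsq : (M * M - 1) * (M * M - 1) = 0 := by
        have e : M * M - 1 = -((M + 1) + (M + 1)) := by rw [h2]; abel
        calc (M * M - 1) * (M * M - 1)
            = -((M + 1) + (M + 1)) * -((M + 1) + (M + 1)) := by rw [e]
          _ = (M+1)*(M+1) + (M+1)*(M+1) + ((M+1)*(M+1) + (M+1)*(M+1)) := by noncomm_ring
          _ = 0 := by rw [hP]; simp
      have hrel2 : C * (M * M) * C' = (M * M) ^ n := by
        have : (C * M * C') * (C * M * C') = M ^ n * M ^ n := by rw [hval]
        calc C * (M * M) * C' = (C * M * C') * (C * M * C') := by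
              conv_lhs => rw [show M * M = M * (C' * C) * M by rw [hC'C]; noncomm_ring]
              noncomm_ring
          _ = M ^ n * M ^ n := by rw [hval]
          _ = (M * M) ^ n := by rw [← pow_add, ← two_mul, pow_mul, pow_two]
      have := aux_unipotent n hn (M * M) C C' hC'C hCC' hrel2 hsq
      exact ⟨2, by simp, lift 2 (by rw [pow_two, this])⟩
    · -- t = -1, d = 1 : M^3 = 1
      have h2 : M * M = -M - 1 := by
        rw [hCH, hd1, ht]
        simp
      have h3 : M ^ 3 = 1 := by
        rw [pow_succ, pow_two, h2, sub_mul, neg_mul, one_mul, h2]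
        abel
      exact ⟨3, by simp, lift 3 h3⟩
    · -- t = 0, d = 1 : M^2 = -1, M^4 = 1
      have h2 : M * M = -1 := by
        rw [hCH, hd1, ht]
        simp
      have h4 : M ^ 4 = 1 := by
        rw [show (4:ℕ) = 2 + 2 from rfl, pow_add, pow_two, h2, neg_mul_neg, one_mul]
      exact ⟨4, by simp, lift 4 h4⟩
    · -- t = 1, d = 1 : M^3 = -1, M^6 = 1
      have h2 : M * M = M - 1 := by
        rw [hCH, hd1, ht]
        simp
      have h3 : M ^ 3 = -1 := by
        rw [pow_succ, pow_two, h2, sub_mul, one_mul, h2]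
        abel
      have h6 : M ^ 6 = 1 := by
        rw [show (6:ℕ) = 3 * 2 from rfl, pow_mul, h3]
        simp
      exact ⟨6, by simp, lift 6 h6⟩
    · -- t = 2, d = 1 : unipotent, M = 1
      have h2 : M * M = (2 : ℤ) • M - (1 : ℤ) • 1 := by rw [hCH, hd1, ht]
      have hsq : (M - 1) * (M - 1) = 0 := by
        have e : (M - 1) * (M - 1) = M * M - M - M + 1 := by noncomm_ring
        rw [e, h2]
        abel
      have := aux_unipotent n hn M C C' hC'C hCC' hval hsq
      exact ⟨1, by simp, lift 1 (by rwa [pow_one])⟩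
  · rcases htcases with ht | ht | ht | ht | ht
    · exact absurd (aux_nogrowth t d n hn s h0 h1 hrec htr (Or.inr hd1)
        (Or.inl ⟨hd1, by rw [ht]; norm_num⟩)) (by simp)
    · exact absurd (aux_nogrowth t d n hn s h0 h1 hrec htr (Or.inr hd1)
        (Or.inl ⟨hd1, by rw [ht]; norm_num⟩)) (by simp)
    · -- t = 0, d = -1 : M^2 = 1
      have h2 : M * M = 1 := by
        rw [hCH, hd1, ht]
        simp
      exact ⟨2, by simp, lift 2 (by rw [pow_two, h2])⟩
    · exact absurd (aux_nogrowth t d n hn s h0 h1 hrec htr (Or.inr hd1)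
        (Or.inl ⟨hd1, by rw [ht]; norm_num⟩)) (by simp)
    · exact absurd (aux_nogrowth t d n hn s h0 h1 hrec htr (Or.inr hd1)
        (Or.inl ⟨hd1, by rw [ht]; norm_num⟩)) (by simp)
end

section
/- Let n ≥ 2 be an integer, let ε ∈ {1, −1}, and let A = [[ε, 1], [0, ε]] ∈ GL(2, ℤ). Then there is no matrix B ∈ GL(2, ℤ) such that B A B⁻¹ = Aⁿ. -/
lemma pow_formula (ε : ℤ) : ∀ k : ℕ,
    (!![ε, 1; 0, ε] : Matrix (Fin 2) (Fin 2) ℤ) ^ (k+1) =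
      !![ε^(k+1), (k+1)*ε^k; 0, ε^(k+1)] := by
  intro k
  induction k with
  | zero => simp
  | succ m ih =>
    rw [pow_succ, ih]
    ext i j
    fin_cases i <;> fin_cases j <;>
      simp [Matrix.mul_apply, Fin.sum_univ_two, pow_succ] <;> ring

lemma aux_nd (m d : ℤ) (hm : 2 ≤ m) : m * d * d ≠ 1 ∧ m * d * d ≠ -1 := by
  constructor <;> intro h <;> rcases eq_or_ne d 0 with rfl | hd <;>
    [skip; skip; skip; skip] <;>
  first
  | simp at h
  | · have h1 : 1 ≤ d * d := by rcases hd.lt_or_gt with h' | h' <;> nlinarith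
      nlinarith

/-- for `n ≥ 2` and `ε ∈ {1, -1}`, the matrix `A = [[ε, 1], [0, ε]]` is
not conjugate in `GL(2, ℤ)` to its `n`-th power. -/
theorem bs_unipotent_matrix_not_conjugate_to_power
    (n : ℕ) (hn : 2 ≤ n) (ε : ℤ) (hε : ε = 1 ∨ ε = -1) :
    ¬ ∃ B : Matrix.GeneralLinearGroup (Fin 2) ℤ,
      (B : Matrix (Fin 2) (Fin 2) ℤ) * !![ε, 1; 0, ε] *
        ((B⁻¹ : Matrix.GeneralLinearGroup (Fin 2) ℤ) : Matrix (Fin 2) (Fin 2) ℤ) =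
      !![ε, 1; 0, ε] ^ n := by
  rintro ⟨B, hB⟩
  obtain ⟨k, rfl⟩ : ∃ k, n = k + 1 := ⟨n - 1, by omega⟩
  have hmul : (B : Matrix (Fin 2) (Fin 2) ℤ) * !![ε, 1; 0, ε] =
      !![ε, 1; 0, ε] ^ (k+1) * (B : Matrix (Fin 2) (Fin 2) ℤ) := by
    calc (B : Matrix (Fin 2) (Fin 2) ℤ) * !![ε, 1; 0, ε]
        = (B : Matrix (Fin 2) (Fin 2) ℤ) * !![ε, 1; 0, ε] *
          (((B⁻¹ : Matrix.GeneralLinearGroup (Fin 2) ℤ) : Matrix (Fin 2) (Fin 2) ℤ) *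
            (B : Matrix (Fin 2) (Fin 2) ℤ)) := by
          rw [show ((B⁻¹ : Matrix.GeneralLinearGroup (Fin 2) ℤ) : Matrix (Fin 2) (Fin 2) ℤ) *
              (B : Matrix (Fin 2) (Fin 2) ℤ) = 1 from B.inv_mul, mul_one]
      _ = !![ε, 1; 0, ε] ^ (k+1) * (B : Matrix (Fin 2) (Fin 2) ℤ) := by
          rw [← mul_assoc, hB]
  rw [pow_formula] at hmul
  have hdet : (B : Matrix (Fin 2) (Fin 2) ℤ) 0 0 * (B : Matrix (Fin 2) (Fin 2) ℤ) 1 1 -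
      (B : Matrix (Fin 2) (Fin 2) ℤ) 0 1 * (B : Matrix (Fin 2) (Fin 2) ℤ) 1 0 = 1 ∨
      (B : Matrix (Fin 2) (Fin 2) ℤ) 0 0 * (B : Matrix (Fin 2) (Fin 2) ℤ) 1 1 -
      (B : Matrix (Fin 2) (Fin 2) ℤ) 0 1 * (B : Matrix (Fin 2) (Fin 2) ℤ) 1 0 = -1 := by
    have hu : IsUnit ((B : Matrix (Fin 2) (Fin 2) ℤ).det) :=
      (Matrix.isUnit_iff_isUnit_det _).mp B.isUnit
    rw [Matrix.det_fin_two] at hu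
    exact Int.isUnit_iff.mp hu
  have hkn : (2:ℤ) ≤ (k:ℤ) + 1 := by exact_mod_cast hn
  set a := (B : Matrix (Fin 2) (Fin 2) ℤ) 0 0
  set b := (B : Matrix (Fin 2) (Fin 2) ℤ) 0 1
  set c := (B : Matrix (Fin 2) (Fin 2) ℤ) 1 0
  set d := (B : Matrix (Fin 2) (Fin 2) ℤ) 1 1
  rcases hε with rfl | rfl
  · -- ε = 1
    have e01 := congrArg (fun M : Matrix (Fin 2) (Fin 2) ℤ => M 0 1) hmul
    have e11 := congrArg (fun M : Matrix (Fin 2) (Fin 2) ℤ => M 1 1) hmul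
    simp [Matrix.mul_apply, Fin.sum_univ_two] at e01 e11
    have hc : c = 0 := by linarith
    have haa : a = ((k:ℤ)+1) * d := by linarith
    rcases hdet with h | h <;> rw [haa, hc] at h
    · exact (aux_nd _ d hkn).1 (by linarith)
    · exact (aux_nd _ d hkn).2 (by linarith)
  · -- ε = -1
    rcases Nat.even_or_odd k with hk | hk
    · have h1 : ((-1:ℤ))^k = 1 := hk.neg_one_pow
      have h2 : ((-1:ℤ))^(k+1) = -1 := hk.add_one.neg_one_pow
      rw [h1, h2] at hmul
      have e01 := congrArg (fun M : Matrix (Fin 2) (Fin 2) ℤ => M 0 1) hmul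
      have e11 := congrArg (fun M : Matrix (Fin 2) (Fin 2) ℤ => M 1 1) hmul
      simp [Matrix.mul_apply, Fin.sum_univ_two] at e01 e11
      have hc : c = 0 := by linarith
      have haa : a = ((k:ℤ)+1) * d := by linarith
      rcases hdet with h | h <;> rw [haa, hc] at h
      · exact (aux_nd _ d hkn).1 (by linarith)
      · exact (aux_nd _ d hkn).2 (by linarith)
    · have h1 : ((-1:ℤ))^k = -1 := hk.neg_one_pow
      have h2 : ((-1:ℤ))^(k+1) = 1 := hk.add_one.neg_one_pow
      rw [h1, h2] at hmul
      have e10 := congrArg (fun M : Matrix (Fin 2) (Fin 2) ℤ => M 1 0) hmul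
      have e11 := congrArg (fun M : Matrix (Fin 2) (Fin 2) ℤ => M 1 1) hmul
      simp [Matrix.mul_apply, Fin.sum_univ_two] at e10 e11
      have hc : c = 0 := by linarith
      have hdd : d = 0 := by linarith
      rcases hdet with h | h <;> rw [hc, hdd] at h <;> simp at h
end

section
/- Let F be a homeomorphism of ℝ² satisfying F(x + P) = F(x) + P for all x ∈ ℝ² and P ∈ ℤ², and let H be a homeomorphism of ℝ² for which there is a matrix A_H ∈ GL(2, ℤ) with H(x + P) = H(x) + A_H · P for all x ∈ ℝ² and P ∈ ℤ². Then the rotation set of H ∘ F ∘ H⁻¹ equals the image of the rotation set of F under the linear map A_H, i.e., ρ(H ∘ F ∘ H⁻¹) = A_H(ρ(F)). -/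
open Filter Topology

/-- The rotation set of a map `G : ℝ² → ℝ²` (commuting with integer translations):
the set of vectors `v` for which there are points `xᵢ` and positive integers `mᵢ → ∞`
with `(G^{mᵢ}(xᵢ) − xᵢ)/mᵢ → v`. -/
def rotSet (G : ℝ × ℝ → ℝ × ℝ) : Set (ℝ × ℝ) :=
  {v | ∃ (x : ℕ → ℝ × ℝ) (m : ℕ → ℕ), (∀ i, 0 < m i) ∧ Tendsto m atTop atTop ∧
    Tendsto (fun i => ((m i : ℝ))⁻¹ • (G^[m i] (x i) - x i)) atTop (nhds v)}

/-- The linear action of an integer 2×2 matrix on `ℝ²`. -/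
def matAct (A : Matrix (Fin 2) (Fin 2) ℤ) (v : ℝ × ℝ) : ℝ × ℝ :=
  ((A 0 0 : ℝ) * v.1 + (A 0 1 : ℝ) * v.2, (A 1 0 : ℝ) * v.1 + (A 1 1 : ℝ) * v.2)

lemma matAct_sub (A : Matrix (Fin 2) (Fin 2) ℤ) (u v : ℝ × ℝ) :
    matAct A (u - v) = matAct A u - matAct A v := by
  simp [matAct, Prod.ext_iff]; constructor <;> ring

lemma matAct_smul (A : Matrix (Fin 2) (Fin 2) ℤ) (c : ℝ) (u : ℝ × ℝ) :
    matAct A (c • u) = c • matAct A u := by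
  simp [matAct, Prod.ext_iff, Prod.smul_def, smul_eq_mul]; constructor <;> ring

lemma matAct_cont (A : Matrix (Fin 2) (Fin 2) ℤ) : Continuous (matAct A) := by
  unfold matAct; fun_prop

lemma periodic_bounded (g : ℝ × ℝ → ℝ × ℝ) (hg : Continuous g)
    (hper : ∀ (x : ℝ × ℝ) (p q : ℤ), g (x + ((p : ℝ), (q : ℝ))) = g x) :
    ∃ C, ∀ x, ‖g x‖ ≤ C := by
  obtain ⟨C, hC⟩ := (isCompact_Icc (a := ((0:ℝ),(0:ℝ))) (b := (1,1))).exists_bound_of_continuousOn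
    hg.continuousOn
  refine ⟨C, fun x => ?_⟩
  have hx : x - ((⌊x.1⌋ : ℝ), (⌊x.2⌋ : ℝ)) ∈ Set.Icc ((0:ℝ),(0:ℝ)) (1,1) := by
    simp only [Set.mem_Icc, Prod.le_def]
    refine ⟨⟨?_, ?_⟩, ⟨?_, ?_⟩⟩
    · simp
    · simp
    · simp; linarith [Int.fract_lt_one x.1]
    · simp; linarith [Int.fract_lt_one x.2]
  have heq : g x = g (x - ((⌊x.1⌋ : ℝ), (⌊x.2⌋ : ℝ))) := by
    have := hper (x - ((⌊x.1⌋ : ℝ), (⌊x.2⌋ : ℝ))) ⌊x.1⌋ ⌊x.2⌋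
    rw [sub_add_cancel] at this
    exact this
  rw [heq]; exact hC _ hx

lemma matAct_add (A : Matrix (Fin 2) (Fin 2) ℤ) (u v : ℝ × ℝ) :
    matAct A (u + v) = matAct A u + matAct A v := by
  simp [matAct, Prod.ext_iff]; constructor <;> ring

lemma rotSet_image_subset (G1 G2 h : ℝ × ℝ → ℝ × ℝ) (B : Matrix (Fin 2) (Fin 2) ℤ)
    (hsemi : ∀ x, h (G1 x) = G2 (h x))
    (hb : ∃ C, ∀ x, ‖h x - matAct B x‖ ≤ C) :
    matAct B '' rotSet G1 ⊆ rotSet G2 := by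
  rintro _ ⟨v, ⟨x, m, hmpos, hmt, hconv⟩, rfl⟩
  obtain ⟨C, hC⟩ := hb
  refine ⟨fun i => h (x i), m, hmpos, hmt, ?_⟩
  have hiter : ∀ (n : ℕ) (y : ℝ × ℝ), G2^[n] (h y) = h (G1^[n] y) := by
    intro n
    induction n with
    | zero => simp
    | succ n ih =>
      intro y
      rw [Function.iterate_succ_apply', ih y, ← hsemi, Function.iterate_succ_apply' G1 n y]
  have key : ∀ i, ((m i : ℝ))⁻¹ • (G2^[m i] (h (x i)) - h (x i))
      = matAct B (((m i : ℝ))⁻¹ • (G1^[m i] (x i) - x i))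
        + ((m i : ℝ))⁻¹ • ((h (G1^[m i] (x i)) - matAct B (G1^[m i] (x i)))
            - (h (x i) - matAct B (x i))) := by
    intro i
    rw [hiter, matAct_smul, matAct_sub, ← smul_add]
    congr 1
    abel
  have t1 : Tendsto (fun i => matAct B (((m i : ℝ))⁻¹ • (G1^[m i] (x i) - x i)))
      atTop (nhds (matAct B v)) := ((matAct_cont B).tendsto v).comp hconv
  have hminv : Tendsto (fun i => ((m i : ℝ))⁻¹) atTop (nhds 0) :=
    tendsto_inv_atTop_zero.comp (tendsto_natCast_atTop_atTop.comp hmt)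
  have t2 : Tendsto (fun i => ((m i : ℝ))⁻¹ • ((h (G1^[m i] (x i)) - matAct B (G1^[m i] (x i)))
      - (h (x i) - matAct B (x i)))) atTop (nhds 0) := by
    refine squeeze_zero_norm (a := fun i => ((m i : ℝ))⁻¹ * (2 * C)) ?_ ?_
    · intro i
      rw [norm_smul]
      have h1 : ‖(h (G1^[m i] (x i)) - matAct B (G1^[m i] (x i)))
          - (h (x i) - matAct B (x i))‖ ≤ 2 * C :=
        (norm_sub_le _ _).trans (by linarith [hC (G1^[m i] (x i)), hC (x i)])
      have h2 : ‖((m i : ℝ))⁻¹‖ = ((m i : ℝ))⁻¹ := by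
        rw [Real.norm_eq_abs, abs_of_nonneg]; positivity
      rw [h2]
      exact mul_le_mul_of_nonneg_left h1 (by positivity)
    · simpa using hminv.mul_const (2 * C)
  have := t1.add t2
  rw [show (fun i => ((m i : ℝ))⁻¹ • (G2^[m i] (h (x i)) - h (x i)))
      = fun i => matAct B (((m i : ℝ))⁻¹ • (G1^[m i] (x i) - x i))
        + ((m i : ℝ))⁻¹ • ((h (G1^[m i] (x i)) - matAct B (G1^[m i] (x i)))
            - (h (x i) - matAct B (x i))) from funext key]
  simpa using this

/-- if `F` commutes with integer translations and `H` satisfies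
`H(x + P) = H(x) + A_H·P` with `A_H ∈ GL(2, ℤ)`, then
`ρ(H ∘ F ∘ H⁻¹) = A_H(ρ(F))`. -/
theorem rotation_set_of_conjugate
    (F H : (ℝ × ℝ) ≃ₜ (ℝ × ℝ)) (A : Matrix (Fin 2) (Fin 2) ℤ)
    (hA : A.det = 1 ∨ A.det = -1)
    (hF : ∀ (x : ℝ × ℝ) (p q : ℤ),
      F (x + ((p : ℝ), (q : ℝ))) = F x + ((p : ℝ), (q : ℝ)))
    (hH : ∀ (x : ℝ × ℝ) (p q : ℤ),
      H (x + ((p : ℝ), (q : ℝ))) = H x + matAct A ((p : ℝ), (q : ℝ))) :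
    rotSet (fun x => H (F (H.symm x))) = matAct A '' rotSet ⇑F := by
  set G2 : ℝ × ℝ → ℝ × ℝ := fun x => H (F (H.symm x)) with hG2
  -- the inverse matrix
  set B : Matrix (Fin 2) (Fin 2) ℤ :=
    !![A.det * A 1 1, -(A.det * A 0 1); -(A.det * A 1 0), A.det * A 0 0] with hB
  have hdet : (A.det : ℝ) * (A.det : ℝ) = 1 := by
    rcases hA with h | h <;> rw [h] <;> norm_num
  have hdetR : (A.det : ℝ) = (A 0 0 : ℝ) * (A 1 1 : ℝ) - (A 0 1 : ℝ) * (A 1 0 : ℝ) := by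
    rw [Matrix.det_fin_two]; push_cast; ring
  have hB00 : ((B 0 0 : ℤ) : ℝ) = (A.det : ℝ) * A 1 1 := by rw [show B 0 0 = A.det * A 1 1 from rfl, Int.cast_mul]
  have hB01 : ((B 0 1 : ℤ) : ℝ) = -((A.det : ℝ) * A 0 1) := by rw [show B 0 1 = -(A.det * A 0 1) from rfl, Int.cast_neg, Int.cast_mul]
  have hB10 : ((B 1 0 : ℤ) : ℝ) = -((A.det : ℝ) * A 1 0) := by rw [show B 1 0 = -(A.det * A 1 0) from rfl, Int.cast_neg, Int.cast_mul]
  have hB11 : ((B 1 1 : ℤ) : ℝ) = (A.det : ℝ) * A 0 0 := by rw [show B 1 1 = A.det * A 0 0 from rfl, Int.cast_mul]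
  have hAB : ∀ v : ℝ × ℝ, matAct A (matAct B v) = v := by
    rintro ⟨v1, v2⟩
    simp only [matAct, Prod.ext_iff]
    rw [hB00, hB01, hB10, hB11]
    constructor
    · linear_combination v1 * hdet - (A.det : ℝ) * v1 * hdetR
    · linear_combination v2 * hdet - (A.det : ℝ) * v2 * hdetR
  have hBA : ∀ v : ℝ × ℝ, matAct B (matAct A v) = v := by
    rintro ⟨v1, v2⟩
    simp only [matAct, Prod.ext_iff]
    rw [hB00, hB01, hB10, hB11]
    constructor
    · linear_combination v1 * hdet - (A.det : ℝ) * v1 * hdetR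
    · linear_combination v2 * hdet - (A.det : ℝ) * v2 * hdetR
  -- forward inclusion: A(rotSet F) ⊆ rotSet G2
  have fwd : matAct A '' rotSet ⇑F ⊆ rotSet G2 := by
    apply rotSet_image_subset ⇑F G2 ⇑H A
    · intro x; simp [hG2]
    · apply periodic_bounded
      · exact H.continuous.sub (matAct_cont A)
      · intro x p q
        rw [hH, matAct_add]
        abel
  -- H.symm quasi-periodicity
  have hHsymm : ∀ (y : ℝ × ℝ) (p q : ℤ),
      H.symm (y + ((p : ℝ), (q : ℝ))) = H.symm y + matAct B ((p : ℝ), (q : ℝ)) := by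
    intro y p q
    have hint : matAct B ((p : ℝ), (q : ℝ))
        = (((A.det * A 1 1 * p - A.det * A 0 1 * q : ℤ) : ℝ),
           ((-(A.det * A 1 0) * p + A.det * A 0 0 * q : ℤ) : ℝ)) := by
      simp only [matAct, Prod.ext_iff]
      rw [hB00, hB01, hB10, hB11]
      constructor <;> push_cast <;> ring
    have := hH (H.symm y) (A.det * A 1 1 * p - A.det * A 0 1 * q)
      (-(A.det * A 1 0) * p + A.det * A 0 0 * q)
    rw [← hint, H.apply_symm_apply, hAB] at this
    calc H.symm (y + ((p : ℝ), (q : ℝ))) = H.symm (H (H.symm y + matAct B ((p : ℝ), (q : ℝ)))) := by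
          rw [this]
      _ = H.symm y + matAct B ((p : ℝ), (q : ℝ)) := H.symm_apply_apply _
  -- backward: B(rotSet G2) ⊆ rotSet F
  have bwd : matAct B '' rotSet G2 ⊆ rotSet ⇑F := by
    apply rotSet_image_subset G2 ⇑F ⇑H.symm B
    · intro x; simp [hG2]
    · apply periodic_bounded
      · exact H.symm.continuous.sub (matAct_cont B)
      · intro x p q
        rw [hHsymm, matAct_add]
        abel
  apply Set.Subset.antisymm _ fwd
  intro v hv
  exact ⟨matAct B v, bwd (Set.mem_image_of_mem _ hv), hAB v⟩
end

section
/- Let n ≥ 2 be an integer and let X = (ℝ ∪ {∞}) × S¹ be the product of the one-point compactification of ℝ and the circle ℝ/ℤ. Let α be irrational, and let f, h be homeomorphisms of X satisfying f(x, θ) = (x + 1, θ) and h(x, θ) = (n·x, θ + α) for all x ∈ ℝ and θ ∈ S¹ (so f(∞, θ) = (∞, θ) and h(∞, θ) = (∞, θ + α)). Then: (i) there is no nonempty finite subset S ⊆ X with f(S) = S and h(S) = S (no finite orbit of the action); and (ii) the circle C₁ = {∞} × S¹ satisfies f(C₁) = C₁ and h(C₁) = C₁, and every nonempty closed subset K ⊆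 X with f(K) = K and h(K) = K contains C₁; in particular C₁ is the unique minimal set of the action and it is contained in fix(f). -/
open OnePoint

abbrev CylSpace : Type := OnePoint ℝ × AddCircle (1 : ℝ)

/-- If `m • β = 0` in `AddCircle 1` with `β = α` irrational, then `m = 0`. -/
lemma zsmul_injective_of_irrational (α : ℝ) (hα : Irrational α) :
    Function.Injective (fun m : ℤ => m • ((α : ℝ) : AddCircle (1 : ℝ))) := by
  intro m₁ m₂ hm
  by_contra hne
  have hz : (((m₁ - m₂) • α : ℝ) : AddCircle (1 : ℝ)) = 0 := by
    rw [AddCircle.coe_zsmul, sub_smul]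
    simp only at hm
    rw [hm, sub_self]
  rw [AddCircle.coe_eq_zero_iff] at hz
  obtain ⟨z, hzz⟩ := hz
  have hmm : m₁ - m₂ ≠ 0 := sub_ne_zero.mpr (fun hc => hne hc)
  have : Irrational (((m₁ - m₂ : ℤ) : ℝ) * α) := hα.intCast_mul hmm
  have hzz' : ((m₁ - m₂ : ℤ) : ℝ) * α = (z : ℝ) := by
    rw [zsmul_eq_mul, zsmul_eq_mul, mul_one] at hzz
    exact hzz.symm
  rw [hzz'] at this
  exact z.not_irrational this

/-- The orbit of any point under the irrational rotation is dense in `AddCircle 1`. -/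
lemma dense_orbit_irrational (α : ℝ) (hα : Irrational α) (θ : AddCircle (1 : ℝ)) :
    Dense (Set.range fun k : ℤ => θ + k • ((α : ℝ) : AddCircle (1 : ℝ))) := by
  set S : AddSubgroup ℝ := AddSubgroup.closure {1, α} with hS
  have hdense : Dense (S : Set ℝ) := by
    rcases S.dense_or_cyclic with hd | ⟨a, ha⟩
    · exact hd
    · exfalso
      have h1 : (1 : ℝ) ∈ S := AddSubgroup.subset_closure (by simp)
      have h2 : α ∈ S := AddSubgroup.subset_closure (by simp)
      rw [ha, AddSubgroup.mem_closure_singleton] at h1 h2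
      obtain ⟨m, hm⟩ := h1
      obtain ⟨k, hk⟩ := h2
      have hm0 : m ≠ 0 := by rintro rfl; simp at hm
      have hm' : (m : ℝ) * a = 1 := by rw [← hm, zsmul_eq_mul]
      have hk' : (k : ℝ) * a = α := by rw [← hk, zsmul_eq_mul]
      have : (m : ℝ) * α = k := by
        rw [← hk', ← mul_assoc, mul_comm (m : ℝ) (k : ℝ), mul_assoc, hm', mul_one]
      exact k.not_irrational (this ▸ hα.intCast_mul hm0)
  have hcont : Continuous fun x : ℝ => θ + ((x : ℝ) : AddCircle (1 : ℝ)) :=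
    (continuous_const.add (AddCircle.continuous_mk' 1))
  have hsurj : Function.Surjective fun x : ℝ => θ + ((x : ℝ) : AddCircle (1 : ℝ)) := by
    intro ψ
    obtain ⟨x, hx⟩ := QuotientAddGroup.mk_surjective (ψ - θ)
    refine ⟨x, ?_⟩
    have hx' : ((x : ℝ) : AddCircle (1 : ℝ)) = ψ - θ := hx
    simp only
    rw [hx']
    abel
  have himg : Dense ((fun x : ℝ => θ + ((x : ℝ) : AddCircle (1 : ℝ))) '' S) :=
    hsurj.denseRange.dense_image hcont hdense
  refine himg.mono ?_
  rintro _ ⟨x, hx, rfl⟩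
  have hx : x ∈ AddSubgroup.closure ({1, α} : Set ℝ) := hx
  rw [AddSubgroup.mem_closure_pair] at hx
  obtain ⟨m, k, hmk⟩ := hx
  refine ⟨k, ?_⟩
  simp only
  rw [← hmk]
  have : ((↑(m • (1 : ℝ) + k • α)) : AddCircle (1 : ℝ)) = k • ((α : ℝ) : AddCircle (1 : ℝ)) := by
    rw [AddCircle.coe_add, AddCircle.coe_zsmul, AddCircle.coe_zsmul, AddCircle.coe_period]
    simp
  rw [this]

/-- for `f(x,θ) = (x+1,θ)` and `h(x,θ) = (nx, θ+α)` with `α` irrational: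
(i) there is no nonempty finite subset invariant under both `f` and `h`; and
(ii) the circle `C₁ = {∞} × S¹` is invariant under `f` and `h`, is contained in the
fixed-point set of `f`, and is contained in every nonempty closed subset invariant
under both `f` and `h`; in particular it is the unique minimal set of the action. -/
theorem bs_product_action_irrational_rotation_unique_minimal_set
    (n : ℕ) (hn : 2 ≤ n) (α : ℝ) (hα : Irrational α)
    (f h : CylSpace ≃ₜ CylSpace)
    (hf : ∀ (x : ℝ) (θ : AddCircle (1 : ℝ)), f (↑x, θ) = (↑(x + 1), θ))
    (hfinf : ∀ θ : AddCircle (1 : ℝ), f (∞, θ) = (∞, θ))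
    (hh : ∀ (x : ℝ) (θ : AddCircle (1 : ℝ)),
      h (↑x, θ) = (↑((n : ℝ) * x), θ + ((α : ℝ) : AddCircle (1 : ℝ))))
    (hhinf : ∀ θ : AddCircle (1 : ℝ),
      h (∞, θ) = (∞, θ + ((α : ℝ) : AddCircle (1 : ℝ)))) :
    (¬ ∃ S : Set CylSpace, S.Nonempty ∧ S.Finite ∧ ⇑f '' S = S ∧ ⇑h '' S = S) ∧
    (let C₁ : Set CylSpace := ({∞} : Set (OnePoint ℝ)) ×ˢ Set.univ
     ⇑f '' C₁ = C₁ ∧ ⇑h '' C₁ = C₁ ∧ C₁ ⊆ {p : CylSpace | f p = p} ∧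
       ∀ K : Set CylSpace, K.Nonempty → IsClosed K → ⇑f '' K = K → ⇑h '' K = K →
         C₁ ⊆ K) := by
  haveI : Fact ((0 : ℝ) < 1) := ⟨one_pos⟩
  set β : AddCircle (1 : ℝ) := ((α : ℝ) : AddCircle (1 : ℝ)) with hβ
  -- h.symm at infinity
  have hhsymm : ∀ θ : AddCircle (1 : ℝ), h.symm (∞, θ) = (∞, θ - β) := by
    intro θ
    rw [show ((∞ : OnePoint ℝ), θ) = h (∞, θ - β) by rw [hhinf, sub_add_cancel],
      Homeomorph.symm_apply_apply]
  constructor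
  · -- Part (i): no finite invariant set
    rintro ⟨S, ⟨p₀, hp₀⟩, hSfin, hfS, hhS⟩
    have hfmem : ∀ p ∈ S, f p ∈ S := fun p hp => hfS ▸ Set.mem_image_of_mem _ hp
    have hhmem : ∀ p ∈ S, h p ∈ S := fun p hp => hhS ▸ Set.mem_image_of_mem _ hp
    -- no real point can be in S
    have hreal : ∀ (x : ℝ) (θ : AddCircle (1 : ℝ)), ((x : OnePoint ℝ), θ) ∉ S := by
      intro x θ hx
      have key : ∀ k : ℕ, (((x + k : ℝ) : OnePoint ℝ), θ) ∈ S := by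
        intro k
        induction k with
        | zero => simpa using hx
        | succ k ih =>
          have := hfmem _ ih
          rw [hf] at this
          convert this using 3
          push_cast; ring
      have : S.Infinite := by
        apply Set.infinite_of_injective_forall_mem
          (f := fun k : ℕ => (((x + k : ℝ) : OnePoint ℝ), θ)) _ key
        intro k₁ k₂ hk
        simp only [Prod.mk.injEq, OnePoint.coe_eq_coe] at hk
        exact_mod_cast (by linarith [hk.1] : (k₁ : ℝ) = k₂)
      exact this hSfin
    -- so p₀ is at infinity
    obtain ⟨u, θ₀⟩ := p₀
    induction u using OnePoint.rec with
    | infty =>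
      have key : ∀ m : ℕ, ((∞ : OnePoint ℝ), θ₀ + m • β) ∈ S := by
        intro m
        induction m with
        | zero => simpa using hp₀
        | succ m ih =>
          have := hhmem _ ih
          rw [hhinf] at this
          rw [succ_nsmul, ← add_assoc]
          exact this
      have : S.Infinite := by
        apply Set.infinite_of_injective_forall_mem
          (f := fun m : ℕ => ((∞ : OnePoint ℝ), θ₀ + m • β)) _ key
        intro m₁ m₂ hm
        simp only [Prod.mk.injEq, add_right_inj, true_and] at hm
        have : ((m₁ : ℤ)) • β = ((m₂ : ℤ)) • β := by
          rw [natCast_zsmul, natCast_zsmul, hm]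
        exact_mod_cast zsmul_injective_of_irrational α hα this
      exact this hSfin
    | coe x => exact hreal x θ₀ hp₀
  · -- Part (ii)
    intro C₁
    have hmemC₁ : ∀ p : CylSpace, p ∈ C₁ ↔ p.1 = ∞ := by
      intro p
      rw [Set.mem_prod]
      simp [C₁]
    refine ⟨?_, ?_, ?_, ?_⟩
    · -- f '' C₁ = C₁
      apply Set.Subset.antisymm
      · rintro _ ⟨⟨u, θ⟩, hu, rfl⟩
        rw [hmemC₁] at hu; simp only at hu; subst hu
        rw [hfinf]; rw [hmemC₁]
      · rintro ⟨u, θ⟩ hu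
        rw [hmemC₁] at hu; simp only at hu; subst hu
        exact ⟨(∞, θ), (hmemC₁ _).mpr rfl, hfinf θ⟩
    · -- h '' C₁ = C₁
      apply Set.Subset.antisymm
      · rintro _ ⟨⟨u, θ⟩, hu, rfl⟩
        rw [hmemC₁] at hu; simp only at hu; subst hu
        rw [hhinf]; rw [hmemC₁]
      · rintro ⟨u, θ⟩ hu
        rw [hmemC₁] at hu; simp only at hu; subst hu
        refine ⟨(∞, θ - β), (hmemC₁ _).mpr rfl, ?_⟩
        rw [hhinf, sub_add_cancel]
    · -- C₁ ⊆ fix f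
      rintro ⟨u, θ⟩ hu
      rw [hmemC₁] at hu; simp only at hu; subst hu
      exact hfinf θ
    · -- every nonempty closed invariant K contains C₁
      intro K hKne hKcl hfK hhK
      have hfmem : ∀ p ∈ K, f p ∈ K := fun p hp => hfK ▸ Set.mem_image_of_mem _ hp
      have hhmem : ∀ p ∈ K, h p ∈ K := fun p hp => hhK ▸ Set.mem_image_of_mem _ hp
      have hhsmem : ∀ p ∈ K, h.symm p ∈ K := by
        intro p hp
        rw [← hhK] at hp
        obtain ⟨q, hq, rfl⟩ := hp
        rwa [Homeomorph.symm_apply_apply]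
      -- Step 1: K contains a point at infinity
      have hstep1 : ∃ θ : AddCircle (1 : ℝ), ((∞ : OnePoint ℝ), θ) ∈ K := by
        -- first find a real point with nonzero coordinate, or an infinity point
        obtain ⟨⟨u, θ⟩, hp⟩ := hKne
        induction u using OnePoint.rec with
        | infty => exact ⟨θ, hp⟩
        | coe x =>
          have hyex : ∃ (y : ℝ) (θ' : AddCircle (1 : ℝ)), y ≠ 0 ∧ ((y : OnePoint ℝ), θ') ∈ K := by
            by_cases hx : x = 0
            · refine ⟨x + 1, θ, by rw [hx]; norm_num, ?_⟩
              have := hfmem _ hp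
              rwa [hf] at this
            · exact ⟨x, θ, hx, hp⟩
          obtain ⟨y, θ', hy0, hyK⟩ := hyex
          set q : ℕ → CylSpace := fun k => ((((n : ℝ) ^ k * y : ℝ) : OnePoint ℝ), θ' + k • β)
            with hq
          have hqK : ∀ k, q k ∈ K := by
            intro k
            induction k with
            | zero => simpa [hq] using hyK
            | succ k ih =>
              have := hhmem _ ih
              rw [hq] at this ⊢
              simp only at this ⊢
              rw [hh] at this
              convert this using 2
              · rw [OnePoint.coe_eq_coe]; ring
              · rw [succ_nsmul, ← add_assoc]
          -- first coordinates tend to ∞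
          have hn1 : (1 : ℝ) < (n : ℝ) := by
            have : (2 : ℝ) ≤ (n : ℝ) := by exact_mod_cast hn
            linarith
          have hpow : Filter.Tendsto (fun k : ℕ => (n : ℝ) ^ k) Filter.atTop Filter.atTop :=
            tendsto_pow_atTop_atTop_of_one_lt hn1
          have hco : Filter.Tendsto (fun k : ℕ => (n : ℝ) ^ k * y) Filter.atTop
              (Filter.cocompact ℝ) := by
            rw [cocompact_eq_atBot_atTop]
            rcases lt_or_gt_of_ne hy0 with hy | hy
            · exact (hpow.atTop_mul_const_of_neg hy).mono_right le_sup_left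
            · exact (hpow.atTop_mul_const hy).mono_right le_sup_right
          have hfst : Filter.Tendsto (fun k : ℕ => (((n : ℝ) ^ k * y : ℝ) : OnePoint ℝ))
              Filter.atTop (nhds (∞ : OnePoint ℝ)) := by
            apply OnePoint.tendsto_coe_infty.comp
            rwa [Filter.coclosedCompact_eq_cocompact]
          -- K is compact; get a cluster point of q
          have hKcomp : IsCompact K := hKcl.isCompact
          have hle : Filter.map q Filter.atTop ≤ Filter.principal K :=
            Filter.tendsto_principal.mpr (Filter.Eventually.of_forall hqK)
          obtain ⟨a, haK, hacl⟩ := hKcomp.exists_mapClusterPt hle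
          have hfstcl : MapClusterPt a.1 Filter.atTop (Prod.fst ∘ q) :=
            hacl.continuousAt_comp (Continuous.continuousAt continuous_fst)
          have ha1 : a.1 = ∞ := by
            have hne : (nhds a.1 ⊓ Filter.map (Prod.fst ∘ q) Filter.atTop).NeBot := hfstcl
            have hle2 : Filter.map (Prod.fst ∘ q) Filter.atTop ≤ nhds (∞ : OnePoint ℝ) := hfst
            exact eq_of_nhds_neBot (hne.mono (inf_le_inf_left _ hle2))
          exact ⟨a.2, by rw [← ha1]; exact haK⟩
      obtain ⟨θI, hθI⟩ := hstep1
      -- Step 2: the slice A of K at infinity is closed and rotation-invariant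
      set A : Set (AddCircle (1 : ℝ)) := (fun θ => ((∞ : OnePoint ℝ), θ)) ⁻¹' K with hA
      have hAcl : IsClosed A := hKcl.preimage (continuous_const.prodMk continuous_id)
      have hAorb : ∀ k : ℤ, θI + k • β ∈ A := by
        intro k
        induction k using Int.induction_on with
        | zero => simpa [hA] using hθI
        | succ k ih =>
          have := hhmem _ ih
          rw [hhinf] at this
          have heq : θI + ((k : ℤ) + 1) • β = θI + (k : ℤ) • β + β := by
            rw [add_zsmul, one_zsmul]; abel
          rw [hA, Set.mem_preimage, heq]
          exact this
        | pred k ih =>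
          have := hhsmem _ ih
          rw [hhsymm] at this
          have heq : θI + (-(k : ℤ) - 1) • β = θI + (-(k : ℤ)) • β - β := by
            rw [sub_zsmul, one_zsmul]; abel
          rw [hA, Set.mem_preimage, heq]
          exact this
      -- Step 3: by density, A = univ
      have hAuniv : ∀ θ : AddCircle (1 : ℝ), θ ∈ A := by
        have hsub : Set.range (fun k : ℤ => θI + k • β) ⊆ A := by
          rintro _ ⟨k, rfl⟩; exact hAorb k
        have hdense : Dense (Set.range fun k : ℤ => θI + k • β) := by
          refine (dense_orbit_irrational α hα θI).mono ?_
          rintro _ ⟨k, rfl⟩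
          exact ⟨k, by rw [hβ]⟩
        intro θ
        have : closure (Set.range fun k : ℤ => θI + k • β) ⊆ A := hAcl.closure_subset_iff.mpr hsub
        rw [hdense.closure_eq] at this
        exact this (Set.mem_univ θ)
      rintro ⟨u, θ⟩ hu
      rw [hmemC₁] at hu; simp only at hu; subst hu
      exact hAuniv θ
end
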